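/- arXiv:1109.6580 — 7 statements merged into one kernel-verified Lean document; each statement's English description precedes it below -/
import Mathlib

section
/- For every θ ∈ [0,1] and every integer n ≥ 1, if f^{(n-1)} is absolutely continuous on [a,b], then ∫_a^b f(x) dx = (b-a)[(1-θ) f((a+b)/2) + θ (f(a)+f(b))/2] + Σ_{i=1}^{⌊(n-1)/2⌋} [1-θ(2i+1)](b-a)^{2i+1} / ((2i+1)!·2^{2i}) · f^{(2i)}((a+b)/2) + (-1)^n ∫_a^b G_n(x) f^{(n)}(x) dx. -/
open MeasureTheory intervalIntegral

/-- The Peano kernel `G_n` from the paper (first branch on `[a,(a+b)/2]`,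
second branch on `((a+b)/2, b]`). -/
noncomputable def G (a b θ : ℝ) (n : ℕ) (x : ℝ) : ℝ :=
  if x ≤ (a + b) / 2 then
    (x - a) ^ (n - 1) / (n.factorial : ℝ) * (x - a - θ * n * (b - a) / 2)
  else
    (x - b) ^ (n - 1) / (n.factorial : ℝ) * (x - b + θ * n * (b - a) / 2)

/-- The quadrature functional `F_n`. -/
noncomputable def quadF (a b θ : ℝ) (n : ℕ) (f : ℝ → ℝ) : ℝ :=
  (b - a) * ((1 - θ) * f ((a + b) / 2) + θ * (f a + f b) / 2)
    + ∑ i ∈ Finset.Icc 1 ((n - 1) / 2),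
        (1 - θ * (2 * (i : ℝ) + 1)) * (b - a) ^ (2 * i + 1)
          / (((2 * i + 1).factorial : ℝ) * 2 ^ (2 * i)) * iteratedDeriv (2 * i) f ((a + b) / 2)

/-- `σ(g) = ∫ g² - (1/(b-a)) (∫ g)²`. -/
noncomputable def qsigma (a b : ℝ) (g : ℝ → ℝ) : ℝ :=
  (∫ x in a..b, (g x) ^ 2) - (1 / (b - a)) * (∫ x in a..b, g x) ^ 2


lemma ibp_ac (u u' h V : ℝ → ℝ) (a m : ℝ) (ham : a ≤ m)
    (hu : ∀ x ∈ Set.Icc a m, HasDerivAt u (u' x) x)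
    (hu' : Continuous u')
    (hh : IntervalIntegrable h volume a m)
    (hV : ∀ x ∈ Set.Icc a m, V x = V a + ∫ t in a..x, h t) :
    ∫ x in a..m, u x * h x
      = u m * V m - u a * V a - ∫ x in a..m, u' x * V x := by
  have huIcc : Set.uIcc a m = Set.Icc a m := Set.uIcc_of_le ham
  set H : ℝ → ℝ := fun x => ∫ t in a..x, h t with hH
  have hHc : ContinuousOn H (Set.Icc a m) := by
    rw [← huIcc]
    exact intervalIntegral.continuousOn_primitive_interval (by
      rw [huIcc]; exact (integrableOn_Icc_iff_integrableOn_Ioc).2 hh.1)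
  set W : ℝ → ℝ := fun x => ∫ t in a..x, u' t with hW
  have hWc : ContinuousOn W (Set.Icc a m) := by
    rw [← huIcc]
    exact intervalIntegral.continuousOn_primitive_interval
      ((hu'.continuousOn).integrableOn_compact (by rw [huIcc]; exact isCompact_Icc))
  have hu'int : ∀ x ∈ Set.Icc a m, IntervalIntegrable u' volume a x :=
    fun x hx => hu'.intervalIntegrable a x
  -- u x = u a + W x on Icc a m
  have hux : ∀ x ∈ Set.Icc a m, u x = u a + W x := by
    intro x hx
    have : ∫ t in a..x, u' t = u x - u a := by
      apply intervalIntegral.integral_eq_sub_of_hasDerivAt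
      · intro t ht
        apply hu
        rw [Set.uIcc_of_le hx.1] at ht
        exact ⟨ht.1, ht.2.trans hx.2⟩
      · exact hu'.intervalIntegrable a x
    simp only [hW]; rw [this]; ring
  -- the Fubini swap
  have hhi : IntegrableOn h (Set.Ioc a m) volume := hh.1
  obtain ⟨C, hC⟩ := isCompact_Icc.exists_bound_of_continuousOn (hu'.continuousOn (s := Set.Icc a m))
  set M := max C 0 with hM
  have hMb : ∀ y ∈ Set.Icc a m, ‖u' y‖ ≤ M := fun y hy => (hC y hy).trans (le_max_left _ _)
  set μ := volume.restrict (Set.Ioc a m) with hμ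
  have hfin : IsFiniteMeasure μ := by
    constructor
    simp [hμ, Real.volume_Ioc]
  set F : ℝ → ℝ → ℝ := fun x t => (Set.Ioc a x).indicator u' t * h x with hF
  have hS : MeasurableSet {p : ℝ × ℝ | a < p.2 ∧ p.2 ≤ p.1} := by
    apply MeasurableSet.inter
    · exact measurableSet_lt measurable_const measurable_snd
    · exact measurableSet_le measurable_snd measurable_fst
  have hFeq : Function.uncurry F = fun p : ℝ × ℝ =>
      ({p : ℝ × ℝ | a < p.2 ∧ p.2 ≤ p.1}.indicator (fun q => u' q.2) p) * h p.1 := by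
    funext p
    simp only [Function.uncurry, hF, Set.indicator_apply, Set.mem_Ioc, Set.mem_setOf_eq]
  have hFint : Integrable (Function.uncurry F) (μ.prod μ) := by
    have hbase : Integrable (fun p : ℝ × ℝ => h p.1 * (1 : ℝ)) (μ.prod μ) :=
      hhi.mul_prod (integrable_const 1)
    simp only [mul_one] at hbase
    apply Integrable.mono' (hbase.norm.const_mul M)
    · rw [hFeq]
      apply AEStronglyMeasurable.mul
      · exact ((hu'.comp continuous_snd).measurable.indicator hS).aestronglyMeasurable
      · exact hbase.1
    · rw [hμ, Measure.prod_restrict]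
      filter_upwards [ae_restrict_mem (measurableSet_Ioc.prod measurableSet_Ioc)] with p hp
      rw [hFeq]
      simp only [norm_mul]
      gcongr
      by_cases hmem : p ∈ {p : ℝ × ℝ | a < p.2 ∧ p.2 ≤ p.1}
      · rw [Set.indicator_of_mem hmem]
        exact hMb _ ⟨hp.2.1.le, hp.2.2⟩
      · rw [Set.indicator_of_notMem hmem]
        simp [hM, le_max_right]
  have hswap : (∫ x in a..m, W x * h x)
      = ∫ t in a..m, u' t * ∫ x in t..m, h x := by
    rw [intervalIntegral.integral_of_le ham, intervalIntegral.integral_of_le ham]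
    have h1 : ∀ x ∈ Set.Ioc a m, W x * h x = ∫ t in Set.Ioc a m, F x t := by
      intro x hx
      have : W x = ∫ t in Set.Ioc a m, (Set.Ioc a x).indicator u' t := by
        rw [setIntegral_indicator measurableSet_Ioc,
          Set.inter_eq_self_of_subset_right (Set.Ioc_subset_Ioc_right hx.2)]
        simp only [hW]
        rw [intervalIntegral.integral_of_le hx.1.le]
      rw [this, ← MeasureTheory.integral_mul_const]
    rw [setIntegral_congr_fun measurableSet_Ioc h1]
    rw [MeasureTheory.integral_integral_swap hFint]
    apply setIntegral_congr_fun measurableSet_Ioc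
    intro t ht
    have h2 : ∀ x, F x t = (Set.Ici t).indicator (fun x => u' t * h x) x := by
      intro x
      simp only [hF, Set.indicator_apply, Set.mem_Ioc, Set.mem_Ici]
      by_cases hc : t ≤ x
      · simp [hc, ht.1]
      · simp [hc]
    simp only [h2]
    rw [setIntegral_indicator measurableSet_Ici]
    have : Set.Ioc a m ∩ Set.Ici t = Set.Icc t m := by
      ext x
      simp only [Set.mem_inter_iff, Set.mem_Ioc, Set.mem_Ici, Set.mem_Icc]
      constructor
      · rintro ⟨⟨_, h2⟩, h3⟩; exact ⟨h3, h2⟩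
      · rintro ⟨h1, h2⟩; exact ⟨⟨lt_of_lt_of_le ht.1 h1, h2⟩, h1⟩
    rw [this, MeasureTheory.integral_Icc_eq_integral_Ioc,
      ← intervalIntegral.integral_of_le ht.2, intervalIntegral.integral_const_mul]
  -- assemble
  have hWh : IntervalIntegrable (fun x => W x * h x) volume a m :=
    hh.continuousOn_mul (by rw [huIcc]; exact hWc)
  have hch : IntervalIntegrable (fun x => u a * h x) volume a m := hh.const_mul _
  have e1 : ∫ x in a..m, u x * h x = u a * (∫ x in a..m, h x) + ∫ x in a..m, W x * h x := by
    rw [← intervalIntegral.integral_const_mul, ← intervalIntegral.integral_add hch hWh]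
    apply intervalIntegral.integral_congr
    intro x hx
    rw [huIcc] at hx
    show u x * h x = u a * h x + W x * h x
    rw [hux x hx]; ring
  have hu'H : IntervalIntegrable (fun t => u' t * H t) volume a m :=
    ContinuousOn.intervalIntegrable (by
      rw [huIcc]; exact (hu'.continuousOn).mul hHc)
  have hu'i : IntervalIntegrable u' volume a m := hu'.intervalIntegrable a m
  have e2 : ∀ t ∈ Set.Icc a m, u' t * ∫ x in t..m, h x = u' t * H m - u' t * H t := by
    intro t ht
    have : H t + ∫ x in t..m, h x = H m := by
      rw [hH]
      exact intervalIntegral.integral_add_adjacent_intervals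
        (hh.mono_set (by rw [huIcc, Set.uIcc_of_le ht.1]; exact Set.Icc_subset_Icc_right ht.2))
        (hh.mono_set (by rw [huIcc, Set.uIcc_of_le ht.2]; exact Set.Icc_subset_Icc_left ht.1))
    have h4 : (∫ x in t..m, h x) = H m - H t := by linarith
    rw [h4]; ring
  have e3 : ∫ t in a..m, u' t * ∫ x in t..m, h x
      = H m * (u m - u a) - ∫ t in a..m, u' t * H t := by
    rw [intervalIntegral.integral_congr (g := fun t => u' t * H m - u' t * H t)
      (by intro t ht; rw [huIcc] at ht; exact e2 t ht)]
    rw [intervalIntegral.integral_sub (hu'i.mul_const _) hu'H]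
    have : ∫ t in a..m, u' t * H m = (∫ t in a..m, u' t) * H m :=
      intervalIntegral.integral_mul_const _ _
    rw [this, intervalIntegral.integral_eq_sub_of_hasDerivAt
      (fun t ht => hu t (huIcc ▸ ht)) hu'i]
    ring
  have e4 : ∫ x in a..m, u' x * V x = V a * (u m - u a) + ∫ t in a..m, u' t * H t := by
    rw [intervalIntegral.integral_congr (g := fun t => u' t * V a + u' t * H t)
      (by intro t ht; rw [huIcc] at ht
          show u' t * V t = u' t * V a + u' t * H t
          rw [hV t ht]; ring)]
    rw [intervalIntegral.integral_add (hu'i.mul_const _) hu'H]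
    have : ∫ t in a..m, u' t * V a = (∫ t in a..m, u' t) * V a :=
      intervalIntegral.integral_mul_const _ _
    rw [this, intervalIntegral.integral_eq_sub_of_hasDerivAt
      (fun t ht => hu t (huIcc ▸ ht)) hu'i]
    ring
  have hVm : V m = V a + H m := hV m ⟨ham, le_refl m⟩
  have hHm : H m = ∫ x in a..m, h x := rfl
  rw [e1, hswap, e3, e4, hVm, ← hHm]
  ring


lemma hasDerivAt_branch (p c : ℝ) (m : ℕ) (x : ℝ) :
    HasDerivAt (fun y => (y - p) ^ (m + 1) / ((m + 2).factorial : ℝ) * (y - p + c * (m + 2)))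
      ((x - p) ^ m / ((m + 1).factorial : ℝ) * (x - p + c * (m + 1))) x := by
  have h1 : HasDerivAt (fun y : ℝ => y - p) 1 x := (hasDerivAt_id x).sub_const p
  have h2 : HasDerivAt (fun y : ℝ => (y - p) ^ (m + 1))
      ((m + 1) * (x - p) ^ m * 1) x := by
    have := h1.fun_pow (m + 1)
    simpa using this
  have h3 : HasDerivAt (fun y : ℝ => y - p + c * (m + 2)) 1 x := h1.add_const _
  have h4 := (h2.div_const ((m + 2).factorial : ℝ)).fun_mul h3
  refine h4.congr_deriv ?_
  have hf : ((m + 2).factorial : ℝ) = (m + 2) * ((m + 1).factorial : ℝ) := by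
    rw [Nat.factorial_succ]; push_cast; ring
  have hfne : ((m + 1).factorial : ℝ) ≠ 0 := Nat.cast_ne_zero.2 (Nat.factorial_ne_zero _)
  have hfne2 : ((m : ℝ) + 2) ≠ 0 := by positivity
  rw [hf]
  field_simp
  ring

lemma step_eq (a b θ : ℝ) (m : ℕ) (hab : a < b) (h v : ℝ → ℝ)
    (hh : IntervalIntegrable h volume a b)
    (hvc : ContinuousOn v (Set.Icc a b))
    (hV : ∀ x ∈ Set.Icc a b, v x = v a + ∫ t in a..x, h t) :
    ∫ x in a..b, G a b θ (m + 2) x * h x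
      = ((1 - (-1 : ℝ) ^ (m + 2)) * (1 - θ * (m + 2)) * ((b - a) / 2) ^ (m + 2)
          / ((m + 2).factorial : ℝ)) * v ((a + b) / 2)
        - ∫ x in a..b, G a b θ (m + 1) x * v x := by
  set mid := (a + b) / 2 with hmid
  have ham : a ≤ mid := by rw [hmid]; linarith
  have hmb : mid ≤ b := by rw [hmid]; linarith
  -- the four branch functions
  set uL : ℝ → ℝ := fun x => (x - a) ^ (m + 1) / ((m + 2).factorial : ℝ)
      * (x - a - θ * ((m : ℝ) + 2) * (b - a) / 2) with huL
  set uL' : ℝ → ℝ := fun x => (x - a) ^ m / ((m + 1).factorial : ℝ)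
      * (x - a - θ * ((m : ℝ) + 1) * (b - a) / 2) with huL'
  set uR : ℝ → ℝ := fun x => (x - b) ^ (m + 1) / ((m + 2).factorial : ℝ)
      * (x - b + θ * ((m : ℝ) + 2) * (b - a) / 2) with huR
  set uR' : ℝ → ℝ := fun x => (x - b) ^ m / ((m + 1).factorial : ℝ)
      * (x - b + θ * ((m : ℝ) + 1) * (b - a) / 2) with huR'
  have hdL : ∀ x : ℝ, HasDerivAt uL (uL' x) x := by
    intro x
    have h0 := hasDerivAt_branch a (-(θ * (b - a) / 2)) m x
    have hfun : (fun y => (y - a) ^ (m + 1) / ((m + 2).factorial : ℝ)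
        * (y - a + -(θ * (b - a) / 2) * (m + 2))) = uL := by
      funext y; rw [huL]; push_cast; ring_nf
    have hval : (x - a) ^ m / ((m + 1).factorial : ℝ)
        * (x - a + -(θ * (b - a) / 2) * (m + 1)) = uL' x := by
      rw [huL']; push_cast; ring_nf
    rw [hfun, hval] at h0
    exact h0
  have hdR : ∀ x : ℝ, HasDerivAt uR (uR' x) x := by
    intro x
    have h0 := hasDerivAt_branch b (θ * (b - a) / 2) m x
    have hfun : (fun y => (y - b) ^ (m + 1) / ((m + 2).factorial : ℝ)
        * (y - b + θ * (b - a) / 2 * (m + 2))) = uR := by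
      funext y; rw [huR]; push_cast; ring_nf
    have hval : (x - b) ^ m / ((m + 1).factorial : ℝ)
        * (x - b + θ * (b - a) / 2 * (m + 1)) = uR' x := by
      rw [huR']; push_cast; ring_nf
    rw [hfun, hval] at h0
    exact h0
  have hcL' : Continuous uL' := by rw [huL']; fun_prop
  have hcR' : Continuous uR' := by rw [huR']; fun_prop
  have hcL : Continuous uL := by rw [huL]; fun_prop
  have hcR : Continuous uR := by rw [huR]; fun_prop
  -- G equals branches on the relevant Iocs
  have hGL : ∀ x ∈ Set.Icc a mid, G a b θ (m + 2) x = uL x := by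
    intro x hx
    rw [G, if_pos hx.2, huL]
    push_cast
    norm_num
  have hGR : ∀ x ∈ Set.Ioc mid b, G a b θ (m + 2) x = uR x := by
    intro x hx
    rw [G, if_neg (not_le.2 hx.1), huR]
    push_cast
    norm_num
  have hGL' : ∀ x ∈ Set.Icc a mid, G a b θ (m + 1) x = uL' x := by
    intro x hx
    rw [G, if_pos hx.2, huL']
    push_cast
    norm_num
  have hGR' : ∀ x ∈ Set.Ioc mid b, G a b θ (m + 1) x = uR' x := by
    intro x hx
    rw [G, if_neg (not_le.2 hx.1), huR']
    push_cast
    norm_num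
  -- integrability on pieces
  have hhL : IntervalIntegrable h volume a mid :=
    hh.mono_set (by rw [Set.uIcc_of_le ham, Set.uIcc_of_le hab.le]; exact Set.Icc_subset_Icc_right hmb)
  have hhR : IntervalIntegrable h volume mid b :=
    hh.mono_set (by rw [Set.uIcc_of_le hmb, Set.uIcc_of_le hab.le]; exact Set.Icc_subset_Icc_left ham)
  -- hV on the right half
  have hVR : ∀ x ∈ Set.Icc mid b, v x = v mid + ∫ t in mid..x, h t := by
    intro x hx
    have h1 := hV x ⟨ham.trans hx.1, hx.2⟩
    have h2 := hV mid ⟨ham, hmb⟩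
    have h3 : (∫ t in a..mid, h t) + ∫ t in mid..x, h t = ∫ t in a..x, h t :=
      intervalIntegral.integral_add_adjacent_intervals hhL
        (hh.mono_set (by rw [Set.uIcc_of_le hx.1, Set.uIcc_of_le hab.le]
                         exact Set.Icc_subset_Icc (ham) hx.2))
    rw [h1, h2]; linarith
  -- IBP on the two halves
  have ibpL := ibp_ac uL uL' h v a mid ham (fun x _ => hdL x) hcL' hhL
    (fun x hx => hV x ⟨hx.1, hx.2.trans hmb⟩)
  have ibpR := ibp_ac uR uR' h v mid b hmb (fun x _ => hdR x) hcR' hhR hVR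
  -- endpoint values vanish
  have hLa : uL a = 0 := by rw [huL]; simp
  have hRb : uR b = 0 := by rw [huR]; simp
  -- split the G-integrals
  have hsplitGh : (∫ x in a..mid, G a b θ (m + 2) x * h x)
      + ∫ x in mid..b, G a b θ (m + 2) x * h x = ∫ x in a..b, G a b θ (m + 2) x * h x := by
    apply intervalIntegral.integral_add_adjacent_intervals
    · apply (intervalIntegrable_iff_integrableOn_Ioc_of_le ham).2
      apply ((intervalIntegrable_iff_integrableOn_Ioc_of_le ham).1
        (hhL.continuousOn_mul (hcL.continuousOn))).congr_fun
      · intro x hx; beta_reduce; rw [hGL x (Set.Ioc_subset_Icc_self hx)]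
      · exact measurableSet_Ioc
    · apply (intervalIntegrable_iff_integrableOn_Ioc_of_le hmb).2
      apply ((intervalIntegrable_iff_integrableOn_Ioc_of_le hmb).1
        (hhR.continuousOn_mul (hcR.continuousOn))).congr_fun
      · intro x hx; beta_reduce; rw [hGR x hx]
      · exact measurableSet_Ioc
  have hsplitGv : (∫ x in a..mid, G a b θ (m + 1) x * v x)
      + ∫ x in mid..b, G a b θ (m + 1) x * v x = ∫ x in a..b, G a b θ (m + 1) x * v x := by
    apply intervalIntegral.integral_add_adjacent_intervals
    · apply (intervalIntegrable_iff_integrableOn_Ioc_of_le ham).2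
      apply ((intervalIntegrable_iff_integrableOn_Ioc_of_le ham).1
        (ContinuousOn.intervalIntegrable (u := fun x => uL' x * v x) (by
          rw [Set.uIcc_of_le ham]
          exact (hcL'.continuousOn).mul (hvc.mono (Set.Icc_subset_Icc_right hmb))))).congr_fun
      · intro x hx; beta_reduce; rw [hGL' x (Set.Ioc_subset_Icc_self hx)]
      · exact measurableSet_Ioc
    · apply (intervalIntegrable_iff_integrableOn_Ioc_of_le hmb).2
      apply ((intervalIntegrable_iff_integrableOn_Ioc_of_le hmb).1
        (ContinuousOn.intervalIntegrable (u := fun x => uR' x * v x) (by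
          rw [Set.uIcc_of_le hmb]
          exact (hcR'.continuousOn).mul (hvc.mono (Set.Icc_subset_Icc_left ham))))).congr_fun
      · intro x hx; beta_reduce; rw [hGR' x hx]
      · exact measurableSet_Ioc
  -- rewrite each piece
  have hL1 : ∫ x in a..mid, G a b θ (m + 2) x * h x = ∫ x in a..mid, uL x * h x := by
    apply intervalIntegral.integral_congr
    intro x hx; rw [Set.uIcc_of_le ham] at hx
    beta_reduce; rw [hGL x hx]
  have hR1 : ∫ x in mid..b, G a b θ (m + 2) x * h x = ∫ x in mid..b, uR x * h x := by
    rw [intervalIntegral.integral_of_le hmb, intervalIntegral.integral_of_le hmb]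
    apply setIntegral_congr_fun measurableSet_Ioc
    intro x hx; beta_reduce; rw [hGR x hx]
  have hL2 : ∫ x in a..mid, G a b θ (m + 1) x * v x = ∫ x in a..mid, uL' x * v x := by
    apply intervalIntegral.integral_congr
    intro x hx; rw [Set.uIcc_of_le ham] at hx
    beta_reduce; rw [hGL' x hx]
  have hR2 : ∫ x in mid..b, G a b θ (m + 1) x * v x = ∫ x in mid..b, uR' x * v x := by
    rw [intervalIntegral.integral_of_le hmb, intervalIntegral.integral_of_le hmb]
    apply setIntegral_congr_fun measurableSet_Ioc
    intro x hx; beta_reduce; rw [hGR' x hx]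
  -- the boundary coefficient
  have hcoef : uL mid - uR mid
      = (1 - (-1 : ℝ) ^ (m + 2)) * (1 - θ * (m + 2)) * ((b - a) / 2) ^ (m + 2)
          / ((m + 2).factorial : ℝ) := by
    rw [huL, huR]
    beta_reduce
    have h1 : mid - a = (b - a) / 2 := by rw [hmid]; ring
    have h2 : mid - b = -((b - a) / 2) := by rw [hmid]; ring
    rw [h1, h2]
    have h3 : (-((b - a) / 2)) ^ (m + 1) = (-1 : ℝ) ^ (m + 1) * ((b - a) / 2) ^ (m + 1) := by
      rw [neg_pow]
    rw [h3]
    push_cast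
    ring
  rw [← hsplitGh, hL1, hR1, ibpL, ibpR, hLa, hRb, ← hsplitGv, hL2, hR2, ← hcoef]
  ring

lemma quad_step (a b θ : ℝ) (f : ℝ → ℝ) (m : ℕ) :
    quadF a b θ (m + 2) f = quadF a b θ (m + 1) f
      - (-1 : ℝ) ^ (m + 2) * (((1 - (-1 : ℝ) ^ (m + 2)) * (1 - θ * ((m : ℝ) + 2))
          * ((b - a) / 2) ^ (m + 2) / ((m + 2).factorial : ℝ))
        * iteratedDeriv (m + 1) f ((a + b) / 2)) := by
  rcases Nat.even_or_odd m with he | ho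
  · have h1 : (-1 : ℝ) ^ (m + 2) = 1 := (he.add even_two).neg_one_pow
    rw [h1]
    norm_num
    rw [quadF, quadF]
    have h2 : (m + 2 - 1) / 2 = (m + 1 - 1) / 2 := by
      obtain ⟨j, rfl⟩ := he; omega
    rw [h2]
  · obtain ⟨j, rfl⟩ := ho
    have h1 : (-1 : ℝ) ^ (2 * j + 1 + 2) = -1 := Odd.neg_one_pow ⟨j + 1, by ring⟩
    rw [h1, quadF, quadF]
    have e1 : (2 * j + 1 + 2 - 1) / 2 = j + 1 := by omega
    have e2 : (2 * j + 1 + 1 - 1) / 2 = j := by omega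
    rw [e1, e2, Finset.sum_Icc_succ_top (by omega : 1 ≤ j + 1)]
    have e3 : 2 * (j + 1) = 2 * j + 1 + 1 := by ring
    have e4 : 2 * (j + 1) + 1 = 2 * j + 1 + 2 := by ring
    rw [e4, e3]
    have hf : (((2 * j + 1 + 2).factorial : ℝ)) ≠ 0 := Nat.cast_ne_zero.2 (Nat.factorial_ne_zero _)
    have h2 : ((2 : ℝ)) ^ (2 * j + 1 + 1) ≠ 0 := by positivity
    rw [div_pow]
    push_cast
    field_simp
    ring

lemma base_case (a b θ : ℝ) (f : ℝ → ℝ) (hab : a < b)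
    (hcont : ContinuousOn f (Set.Icc a b))
    (hint : IntervalIntegrable (iteratedDeriv 1 f) volume a b)
    (hftc : ∀ x ∈ Set.Icc a b, f x = f a + ∫ t in a..x, iteratedDeriv 1 f t) :
    (∫ x in a..b, f x)
      = quadF a b θ 1 f + (-1 : ℝ) ^ 1 * ∫ x in a..b, G a b θ 1 x * iteratedDeriv 1 f x := by
  set mid := (a + b) / 2 with hmid
  have ham : a ≤ mid := by rw [hmid]; linarith
  have hmb : mid ≤ b := by rw [hmid]; linarith
  set h : ℝ → ℝ := iteratedDeriv 1 f with hh'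
  set uL : ℝ → ℝ := fun x => x - a - θ * (b - a) / 2 with huL
  set uR : ℝ → ℝ := fun x => x - b + θ * (b - a) / 2 with huR
  have hdL : ∀ x : ℝ, HasDerivAt uL 1 x := by
    intro x
    exact ((hasDerivAt_id x).sub_const a).sub_const (θ * (b - a) / 2)
  have hdR : ∀ x : ℝ, HasDerivAt uR 1 x := by
    intro x
    exact ((hasDerivAt_id x).sub_const b).add_const (θ * (b - a) / 2)
  have hcL : Continuous uL := by rw [huL]; fun_prop
  have hcR : Continuous uR := by rw [huR]; fun_prop
  have hGL : ∀ x ∈ Set.Icc a mid, G a b θ 1 x = uL x := by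
    intro x hx
    rw [G, if_pos hx.2, huL]
    norm_num
  have hGR : ∀ x ∈ Set.Ioc mid b, G a b θ 1 x = uR x := by
    intro x hx
    rw [G, if_neg (not_le.2 hx.1), huR]
    norm_num
  have hhL : IntervalIntegrable h volume a mid :=
    hint.mono_set (by rw [Set.uIcc_of_le ham, Set.uIcc_of_le hab.le]; exact Set.Icc_subset_Icc_right hmb)
  have hhR : IntervalIntegrable h volume mid b :=
    hint.mono_set (by rw [Set.uIcc_of_le hmb, Set.uIcc_of_le hab.le]; exact Set.Icc_subset_Icc_left ham)
  have hVR : ∀ x ∈ Set.Icc mid b, f x = f mid + ∫ t in mid..x, h t := by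
    intro x hx
    have h1 := hftc x ⟨ham.trans hx.1, hx.2⟩
    have h2 := hftc mid ⟨ham, hmb⟩
    have h3 : (∫ t in a..mid, h t) + ∫ t in mid..x, h t = ∫ t in a..x, h t :=
      intervalIntegral.integral_add_adjacent_intervals hhL
        (hint.mono_set (by rw [Set.uIcc_of_le hx.1, Set.uIcc_of_le hab.le]
                           exact Set.Icc_subset_Icc ham hx.2))
    rw [h1, h2]; linarith
  have ibpL := ibp_ac uL (fun _ => 1) h f a mid ham (fun x _ => hdL x) continuous_const hhL
    (fun x hx => hftc x ⟨hx.1, hx.2.trans hmb⟩)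
  have ibpR := ibp_ac uR (fun _ => 1) h f mid b hmb (fun x _ => hdR x) continuous_const hhR hVR
  simp only [one_mul] at ibpL ibpR
  -- f is interval integrable on pieces
  have hfi : IntervalIntegrable f volume a b :=
    ContinuousOn.intervalIntegrable (by rw [Set.uIcc_of_le hab.le]; exact hcont)
  have hfL : IntervalIntegrable f volume a mid :=
    hfi.mono_set (by rw [Set.uIcc_of_le ham, Set.uIcc_of_le hab.le]; exact Set.Icc_subset_Icc_right hmb)
  have hfR : IntervalIntegrable f volume mid b :=
    hfi.mono_set (by rw [Set.uIcc_of_le hmb, Set.uIcc_of_le hab.le]; exact Set.Icc_subset_Icc_left ham)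
  have hsplitf : (∫ x in a..mid, f x) + ∫ x in mid..b, f x = ∫ x in a..b, f x :=
    intervalIntegral.integral_add_adjacent_intervals hfL hfR
  -- split ∫ G·h
  have hsplitGh : (∫ x in a..mid, G a b θ 1 x * h x)
      + ∫ x in mid..b, G a b θ 1 x * h x = ∫ x in a..b, G a b θ 1 x * h x := by
    apply intervalIntegral.integral_add_adjacent_intervals
    · apply (intervalIntegrable_iff_integrableOn_Ioc_of_le ham).2
      apply ((intervalIntegrable_iff_integrableOn_Ioc_of_le ham).1
        (hhL.continuousOn_mul hcL.continuousOn)).congr_fun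
      · intro x hx; beta_reduce; rw [hGL x (Set.Ioc_subset_Icc_self hx)]
      · exact measurableSet_Ioc
    · apply (intervalIntegrable_iff_integrableOn_Ioc_of_le hmb).2
      apply ((intervalIntegrable_iff_integrableOn_Ioc_of_le hmb).1
        (hhR.continuousOn_mul hcR.continuousOn)).congr_fun
      · intro x hx; beta_reduce; rw [hGR x hx]
      · exact measurableSet_Ioc
  have hL1 : ∫ x in a..mid, G a b θ 1 x * h x = ∫ x in a..mid, uL x * h x := by
    apply intervalIntegral.integral_congr
    intro x hx; rw [Set.uIcc_of_le ham] at hx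
    beta_reduce; rw [hGL x hx]
  have hR1 : ∫ x in mid..b, G a b θ 1 x * h x = ∫ x in mid..b, uR x * h x := by
    rw [intervalIntegral.integral_of_le hmb, intervalIntegral.integral_of_le hmb]
    apply setIntegral_congr_fun measurableSet_Ioc
    intro x hx; beta_reduce; rw [hGR x hx]
  have hquad : quadF a b θ 1 f = (b - a) * ((1 - θ) * f mid + θ * (f a + f b) / 2) := by
    rw [quadF]
    norm_num
    exact Or.inl (Or.inl rfl)
  have hvals : uL mid * f mid - uL a * f a - (∫ x in a..mid, f x)
      + (uR b * f b - uR mid * f mid - ∫ x in mid..b, f x)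
      = (b - a) / 2 * (1 - θ) * f mid + θ * (b - a) / 2 * f a + θ * (b - a) / 2 * f b
        + (b - a) / 2 * (1 - θ) * f mid - ∫ x in a..b, f x := by
    rw [huL, huR, ← hsplitf]
    beta_reduce
    rw [hmid]
    ring
  rw [hquad, ← hsplitGh, hL1, hR1, ibpL, ibpR]
  rw [huL, huR] at hvals ⊢
  beta_reduce at hvals ⊢
  rw [← hsplitf] at *
  rw [hmid] at *
  ring_nf

lemma main_aux (a b θ : ℝ) (hab : a < b) :
    ∀ n : ℕ, 1 ≤ n → ∀ f : ℝ → ℝ,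
      (∀ k < n - 1, ∀ x ∈ Set.Icc a b,
        HasDerivAt (iteratedDeriv k f) (iteratedDeriv (k + 1) f x) x) →
      ContinuousOn (iteratedDeriv (n - 1) f) (Set.Icc a b) →
      IntervalIntegrable (iteratedDeriv n f) volume a b →
      (∀ x ∈ Set.Icc a b, iteratedDeriv (n - 1) f x
        = iteratedDeriv (n - 1) f a + ∫ t in a..x, iteratedDeriv n f t) →
      (∫ x in a..b, f x)
        = quadF a b θ n f + (-1 : ℝ) ^ n * ∫ x in a..b, G a b θ n x * iteratedDeriv n f x := by
  intro n hn
  induction n, hn using Nat.le_induction with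
  | base =>
    intro f _ hcont hint hftc
    simp only [Nat.sub_self, iteratedDeriv_zero] at hcont hftc
    exact base_case a b θ f hab hcont hint hftc
  | succ n hn IH =>
    intro f hd hcont hint hftc
    simp only [Nat.add_sub_cancel] at hd hcont hftc
    have hsub : n - 1 < n := Nat.sub_lt hn one_pos
    have hd' : ∀ k < n - 1, ∀ x ∈ Set.Icc a b,
        HasDerivAt (iteratedDeriv k f) (iteratedDeriv (k + 1) f x) x :=
      fun k hk => hd k (hk.trans_le (Nat.sub_le n 1))
    have hdtop : ∀ x ∈ Set.Icc a b,
        HasDerivAt (iteratedDeriv (n - 1) f) (iteratedDeriv n f x) x := by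
      intro x hx
      have := hd (n - 1) hsub x hx
      rwa [Nat.sub_add_cancel hn] at this
    have hcont' : ContinuousOn (iteratedDeriv (n - 1) f) (Set.Icc a b) :=
      fun x hx => ((hdtop x hx).continuousAt).continuousWithinAt
    have hint' : IntervalIntegrable (iteratedDeriv n f) volume a b :=
      ContinuousOn.intervalIntegrable (by rw [Set.uIcc_of_le hab.le]; exact hcont)
    have hftc' : ∀ x ∈ Set.Icc a b, iteratedDeriv (n - 1) f x
        = iteratedDeriv (n - 1) f a + ∫ t in a..x, iteratedDeriv n f t := by
      intro x hx
      have : ∫ t in a..x, iteratedDeriv n f t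
          = iteratedDeriv (n - 1) f x - iteratedDeriv (n - 1) f a := by
        apply intervalIntegral.integral_eq_sub_of_hasDerivAt
        · intro t ht
          rw [Set.uIcc_of_le hx.1] at ht
          exact hdtop t ⟨ht.1, ht.2.trans hx.2⟩
        · exact hint'.mono_set (by
            rw [Set.uIcc_of_le hx.1, Set.uIcc_of_le hab.le]
            exact Set.Icc_subset_Icc_right hx.2)
      linarith
    have IHa := IH f hd' hcont' hint' hftc'
    obtain ⟨m, rfl⟩ : ∃ m, n = m + 1 := ⟨n - 1, (Nat.succ_pred_eq_of_pos hn).symm⟩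
    have hstep := step_eq a b θ m hab (iteratedDeriv (m + 2) f) (iteratedDeriv (m + 1) f)
      hint hcont hftc
    have e2 : m + 1 + 1 = m + 2 := rfl
    rw [e2]
    rw [quad_step a b θ f m, hstep, IHa]
    ring

theorem stmt0 (a b θ : ℝ) (n : ℕ) (f : ℝ → ℝ)
    (hab : a < b) (hθ : θ ∈ Set.Icc (0 : ℝ) 1) (hn : 1 ≤ n)
    (hd : ∀ k < n - 1, ∀ x ∈ Set.Icc a b,
      HasDerivAt (iteratedDeriv k f) (iteratedDeriv (k + 1) f x) x)
    (hcont : ContinuousOn (iteratedDeriv (n - 1) f) (Set.Icc a b))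
    (hint : IntervalIntegrable (iteratedDeriv n f) volume a b)
    (hftc : ∀ x ∈ Set.Icc a b,
      iteratedDeriv (n - 1) f x
        = iteratedDeriv (n - 1) f a + ∫ t in a..x, iteratedDeriv n f t)
    :
    (∫ x in a..b, f x)
      = quadF a b θ n f + (-1 : ℝ) ^ n * ∫ x in a..b, G a b θ n x * iteratedDeriv n f x :=
  main_aux a b θ hab n hn f hd hcont hint hftc
end

section
/- For every θ ∈ [0,1] and every integer n ≥ 1, ∫_a^b G_n(x) dx = 0 if n is odd, and ∫_a^b G_n(x) dx = (b-a)^{n+1} / (n!·2^n) · (1/(n+1) - θ) if n is even. -/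
open MeasureTheory intervalIntegral

lemma key_int (k : ℕ) (p q c : ℝ) :
    ∫ x in p..q, (x - p) ^ k * ((x - p) - c)
      = (q - p) ^ (k + 2) / (k + 2) - c * (q - p) ^ (k + 1) / (k + 1) := by
  have h := intervalIntegral.integral_comp_sub_right (a := p) (b := q)
    (fun u => u ^ k * (u - c)) p
  simp only [sub_self] at h
  rw [h]
  have h1 : IntervalIntegrable (fun u : ℝ => u ^ (k + 1)) volume 0 (q - p) :=
    (continuous_pow _).intervalIntegrable _ _
  have h2 : IntervalIntegrable (fun u : ℝ => c * u ^ k) volume 0 (q - p) :=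
    (continuous_const.mul (continuous_pow _)).intervalIntegrable _ _
  have he : (fun u : ℝ => u ^ k * (u - c)) = fun u => u ^ (k + 1) - c * u ^ k := by
    funext u; ring
  rw [he, integral_sub h1 h2, integral_pow,
    intervalIntegral.integral_const_mul, integral_pow]
  push_cast
  ring

theorem stmt1 (a b θ : ℝ) (n : ℕ)
    (hab : a < b) (hθ : θ ∈ Set.Icc (0 : ℝ) 1) (hn : 1 ≤ n) :
    (Odd n → (∫ x in a..b, G a b θ n x) = 0) ∧
    (Even n → (∫ x in a..b, G a b θ n x)
      = (b - a) ^ (n + 1) / ((n.factorial : ℝ) * 2 ^ n) * (1 / ((n : ℝ) + 1) - θ)) := by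
  obtain ⟨k, rfl⟩ : ∃ k, n = k + 1 := ⟨n - 1, (Nat.succ_pred_eq_of_pos hn).symm⟩
  set m : ℝ := (a + b) / 2 with hm
  have ham : a ≤ m := by rw [hm]; linarith
  have hmb : m ≤ b := by rw [hm]; linarith
  set c : ℝ := θ * ((k : ℝ) + 1) * (b - a) / 2 with hc
  set N : ℝ := ((k + 1).factorial : ℝ) with hN
  have hNpos : (0 : ℝ) < N := by positivity
  -- the two branch functions
  set f1 : ℝ → ℝ := fun x => 1 / N * ((x - a) ^ k * ((x - a) - c)) with hf1
  set f2 : ℝ → ℝ := fun x => 1 / N * ((x - b) ^ k * ((x - b) - (-c))) with hf2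
  have hG1 : ∀ x ∈ Set.Ioc a m, G a b θ (k + 1) x = f1 x := by
    intro x hx
    simp only [G, hf1, if_pos (show x ≤ (a + b) / 2 from hx.2), Nat.add_sub_cancel]
    push_cast
    rw [hc, hN]; ring
  have hG2 : ∀ x ∈ Set.Ioc m b, G a b θ (k + 1) x = f2 x := by
    intro x hx
    simp only [G, hf2, if_neg (not_le.2 (show (a + b) / 2 < x from hx.1)), Nat.add_sub_cancel]
    push_cast
    rw [hc, hN]; ring
  have hae1 : f1 =ᵐ[volume.restrict (Set.uIoc a m)] G a b θ (k + 1) := by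
    filter_upwards [ae_restrict_mem measurableSet_uIoc] with x hx
    rw [Set.uIoc_of_le ham] at hx
    exact (hG1 x hx).symm
  have hae2 : f2 =ᵐ[volume.restrict (Set.uIoc m b)] G a b θ (k + 1) := by
    filter_upwards [ae_restrict_mem measurableSet_uIoc] with x hx
    rw [Set.uIoc_of_le hmb] at hx
    exact (hG2 x hx).symm
  have hcont1 : Continuous f1 := by fun_prop
  have hcont2 : Continuous f2 := by fun_prop
  have hi1 : IntervalIntegrable (G a b θ (k + 1)) volume a m :=
    (hcont1.intervalIntegrable a m).congr_ae hae1
  have hi2 : IntervalIntegrable (G a b θ (k + 1)) volume m b :=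
    (hcont2.intervalIntegrable m b).congr_ae hae2
  have hsplit : (∫ x in a..b, G a b θ (k + 1) x)
      = (∫ x in a..m, G a b θ (k + 1) x) + ∫ x in m..b, G a b θ (k + 1) x :=
    (intervalIntegral.integral_add_adjacent_intervals hi1 hi2).symm
  have e1 : (∫ x in a..m, G a b θ (k + 1) x)
      = 1 / N * ((m - a) ^ (k + 2) / (k + 2) - c * (m - a) ^ (k + 1) / (k + 1)) := by
    rw [intervalIntegral.integral_congr_ae
      (by filter_upwards with x hx; exact hG1 x ((Set.uIoc_of_le ham) ▸ hx))]
    simp only [hf1]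
    rw [intervalIntegral.integral_const_mul, key_int]
  have e2 : (∫ x in m..b, G a b θ (k + 1) x)
      = -(1 / N * ((m - b) ^ (k + 2) / (k + 2) - (-c) * (m - b) ^ (k + 1) / (k + 1))) := by
    rw [intervalIntegral.integral_congr_ae
      (by filter_upwards with x hx; exact hG2 x ((Set.uIoc_of_le hmb) ▸ hx)),
      intervalIntegral.integral_symm]
    simp only [hf2]
    rw [intervalIntegral.integral_const_mul, key_int]
  have hmb' : m - b = -(m - a) := by rw [hm]; ring
  have hma : m - a = (b - a) / 2 := by rw [hm]; ring
  constructor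
  · intro hodd
    have hke : Even k := by simpa [Nat.odd_add_one] using hodd
    have h1 : (-(m - a)) ^ (k + 2) = (m - a) ^ (k + 2) := Even.neg_pow (hke.add even_two) _
    have h2 : (-(m - a)) ^ (k + 1) = -((m - a) ^ (k + 1)) := Odd.neg_pow (Even.add_one hke) _
    rw [hsplit, e1, e2, hmb', h1, h2]
    ring
  · intro heven
    have hko : Odd k := Nat.not_even_iff_odd.1 (Nat.even_add_one.1 heven)
    have h1 : (-(m - a)) ^ (k + 2) = -((m - a) ^ (k + 2)) := Odd.neg_pow (hko.add_even even_two) _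
    have h2 : (-(m - a)) ^ (k + 1) = (m - a) ^ (k + 1) := Even.neg_pow heven _
    rw [hsplit, e1, e2, hmb', h1, h2, hma, hc]
    have hk1 : ((k : ℝ) + 1) ≠ 0 := by positivity
    have hk2 : ((k : ℝ) + 2) ≠ 0 := by positivity
    have hN0 : N ≠ 0 := ne_of_gt hNpos
    push_cast
    simp only [div_pow]
    field_simp
    ring
end

section
/- For every θ ∈ [0,1] and every integer n ≥ 1: if θn ≥ 1 then ∫_a^b |G_n(x)| dx = (b-a)^{n+1}/(n!·2^n) · (θ - 1/(n+1)); and if 0 ≤ θn < 1 then ∫_a^b |G_n(x)| dx = (b-a)^{n+1}/(n·(n+1)!·2^n) · [2(θn)^{n+1} - θn(n+1) + n]. -/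
open MeasureTheory intervalIntegral

lemma poly_int (m : ℕ) (c u v : ℝ) :
    ∫ t in u..v, t ^ m * (t - c)
      = (v ^ (m+2) - u ^ (m+2)) / (m + 2) - c * (v ^ (m+1) - u ^ (m+1)) / (m + 1) := by
  have h1 : ∀ t : ℝ, t ^ m * (t - c) = t ^ (m+1) - c * t ^ m := by intro t; ring
  simp_rw [h1]
  rw [intervalIntegral.integral_sub (f := fun t : ℝ => t ^ (m+1)) (g := fun t : ℝ => c * t ^ m)
      ((continuous_pow _).intervalIntegrable _ _)
      ((continuous_const.mul (continuous_pow _)).intervalIntegrable _ _),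
    intervalIntegral.integral_const_mul, integral_pow, integral_pow]
  push_cast; ring

lemma abs_int_ge (m : ℕ) (c h : ℝ) (hh : 0 ≤ h) (hch : h ≤ c) :
    ∫ t in (0:ℝ)..h, |t ^ m * (t - c)|
      = c * h ^ (m+1) / (m+1) - h ^ (m+2) / (m+2) := by
  have heq : ∀ t ∈ Set.uIcc (0:ℝ) h, |t ^ m * (t - c)| = -(t ^ m * (t - c)) := by
    intro t ht
    rw [Set.uIcc_of_le hh] at ht
    exact abs_of_nonpos (mul_nonpos_of_nonneg_of_nonpos (pow_nonneg ht.1 m)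
      (by linarith [ht.2]))
  rw [intervalIntegral.integral_congr heq, intervalIntegral.integral_neg, poly_int]
  have h1 : ((m:ℝ)+1) ≠ 0 := by positivity
  have h2 : ((m:ℝ)+2) ≠ 0 := by positivity
  push_cast
  field_simp
  ring

lemma abs_int_lt (m : ℕ) (c h : ℝ) (hc : 0 ≤ c) (hch : c ≤ h) :
    ∫ t in (0:ℝ)..h, |t ^ m * (t - c)|
      = 2 * c ^ (m+2) / ((m+1) * (m+2)) + h ^ (m+2) / (m+2) - c * h ^ (m+1) / (m+1) := by
  have hint : ∀ u v : ℝ, IntervalIntegrable (fun t => |t ^ m * (t - c)|) volume u v :=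
    fun u v => (((continuous_pow m).mul (continuous_id.sub continuous_const)).abs).intervalIntegrable u v
  rw [← intervalIntegral.integral_add_adjacent_intervals (hint 0 c) (hint c h)]
  have e1 : (∫ t in (0:ℝ)..c, |t^m*(t-c)|) = -(∫ t in (0:ℝ)..c, t^m*(t-c)) := by
    rw [← intervalIntegral.integral_neg]
    apply intervalIntegral.integral_congr
    intro t ht
    rw [Set.uIcc_of_le hc] at ht
    exact abs_of_nonpos (mul_nonpos_of_nonneg_of_nonpos (pow_nonneg ht.1 m) (by linarith [ht.2]))
  have e2 : (∫ t in c..h, |t^m*(t-c)|) = ∫ t in c..h, t^m*(t-c) := by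
    apply intervalIntegral.integral_congr
    intro t ht
    rw [Set.uIcc_of_le hch] at ht
    exact abs_of_nonneg (mul_nonneg (pow_nonneg (hc.trans ht.1) m) (by linarith [ht.1]))
  rw [e1, e2, poly_int, poly_int]
  have h1 : ((m:ℝ)+1) ≠ 0 := by positivity
  have h2 : ((m:ℝ)+2) ≠ 0 := by positivity
  push_cast
  field_simp
  ring

set_option maxHeartbeats 1000000 in
theorem stmt2 (a b θ : ℝ) (n : ℕ)
    (hab : a < b) (hθ : θ ∈ Set.Icc (0 : ℝ) 1) (hn : 1 ≤ n) :
    (1 ≤ θ * (n : ℝ) → (∫ x in a..b, |G a b θ n x|)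
      = (b - a) ^ (n + 1) / ((n.factorial : ℝ) * 2 ^ n) * (θ - 1 / ((n : ℝ) + 1))) ∧
    (θ * (n : ℝ) < 1 → (∫ x in a..b, |G a b θ n x|)
      = (b - a) ^ (n + 1) / ((n : ℝ) * ((n + 1).factorial : ℝ) * 2 ^ n)
        * (2 * (θ * (n : ℝ)) ^ (n + 1) - θ * (n : ℝ) * ((n : ℝ) + 1) + (n : ℝ))) := by
  obtain ⟨m, rfl⟩ : ∃ m, n = m + 1 := ⟨n - 1, (Nat.succ_pred_eq_of_pos hn).symm⟩
  set mid := (a + b) / 2 with hmid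
  set h := (b - a) / 2 with hh
  set c := θ * (m + 1 : ℕ) * (b - a) / 2 with hc
  have hθ0 : 0 ≤ θ := hθ.1
  have hd : 0 < b - a := by linarith
  have hh0 : 0 < h := by rw [hh]; positivity
  have hamid : a ≤ mid := by rw [hmid]; linarith
  have hmidb : mid ≤ b := by rw [hmid]; linarith
  have hc0 : 0 ≤ c := by rw [hc]; positivity
  set K : ℝ := ((m+1).factorial : ℝ) with hK
  have hK0 : 0 < K := by rw [hK]; exact_mod_cast Nat.factorial_pos _
  -- the two continuous comparison functions
  set g₁ : ℝ → ℝ := fun x => |(x - a) ^ m * (x - a - c)| / K with hg₁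
  set g₂ : ℝ → ℝ := fun x => |(x - b) ^ m * (x - b + c)| / K with hg₂
  have hg₁c : Continuous g₁ := by
    apply Continuous.div_const
    exact (((continuous_id.sub continuous_const).pow m).mul
      ((continuous_id.sub continuous_const).sub continuous_const)).abs
  have hg₂c : Continuous g₂ := by
    apply Continuous.div_const
    exact (((continuous_id.sub continuous_const).pow m).mul
      ((continuous_id.sub continuous_const).add continuous_const)).abs
  have hGval1 : ∀ x : ℝ, x ≤ mid → |G a b θ (m+1) x| = g₁ x := by
    intro x hx
    rw [hg₁]
    simp only [G, if_pos (show x ≤ (a + b) / 2 from hx), Nat.add_sub_cancel]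
    rw [div_mul_eq_mul_div, abs_div, abs_of_pos hK0]
  have hGval2 : ∀ x : ℝ, ¬ x ≤ mid → |G a b θ (m+1) x| = g₂ x := by
    intro x hx
    rw [hg₂]
    simp only [G, if_neg (show ¬ x ≤ (a + b) / 2 from hx), Nat.add_sub_cancel]
    rw [div_mul_eq_mul_div, abs_div, abs_of_pos hK0]
  have hi1 : IntervalIntegrable (fun x => |G a b θ (m+1) x|) volume a mid := by
    apply (hg₁c.intervalIntegrable a mid).congr
    intro x hx
    rw [Set.uIoc_of_le hamid] at hx
    exact (hGval1 x hx.2).symm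
  have hi2 : IntervalIntegrable (fun x => |G a b θ (m+1) x|) volume mid b := by
    apply (hg₂c.intervalIntegrable mid b).congr
    intro x hx
    rw [Set.uIoc_of_le hmidb] at hx
    exact (hGval2 x (not_le.mpr hx.1)).symm
  have hsplit : (∫ x in a..b, |G a b θ (m+1) x|)
      = (∫ x in a..mid, |G a b θ (m+1) x|) + ∫ x in mid..b, |G a b θ (m+1) x| :=
    (intervalIntegral.integral_add_adjacent_intervals hi1 hi2).symm
  have half1 : (∫ x in a..mid, |G a b θ (m+1) x|) = (∫ t in (0:ℝ)..h, |t ^ m * (t - c)|) / K := by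
    rw [intervalIntegral.integral_congr (g := g₁) (fun x hx => by
      rw [Set.uIcc_of_le hamid] at hx; exact hGval1 x hx.2)]
    simp only [hg₁]
    rw [intervalIntegral.integral_div]
    congr 1
    have := intervalIntegral.integral_comp_sub_right (fun t => |t ^ m * (t - c)|) a
      (a := a) (b := mid)
    rw [this, show a - a = (0:ℝ) by ring, show mid - a = h by rw [hmid, hh]; ring]
  have half2 : (∫ x in mid..b, |G a b θ (m+1) x|) = (∫ t in (0:ℝ)..h, |t ^ m * (t - c)|) / K := by
    rw [intervalIntegral.integral_congr_ae (g := g₂) (Filter.Eventually.of_forall (fun x hx => by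
      rw [Set.uIoc_of_le hmidb] at hx; exact hGval2 x (not_le.mpr hx.1)))]
    simp only [hg₂]
    rw [intervalIntegral.integral_div]
    congr 1
    have e1 := intervalIntegral.integral_comp_sub_right (fun t => |t ^ m * (t + c)|) b
      (a := mid) (b := b)
    rw [e1]
    have e2 := intervalIntegral.integral_comp_neg (f := fun t => |t ^ m * (t + c)|)
      (a := (0:ℝ)) (b := h)
    have e3 : ∀ s : ℝ, |(-s) ^ m * (-s + c)| = |s ^ m * (s - c)| := by
      intro s
      have : (-s) ^ m * (-s + c) = (-1:ℝ)^(m+1) * (s ^ m * (s - c)) := by ring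
      rw [this, abs_mul, abs_pow, abs_neg, abs_one, one_pow, one_mul]
    simp only [e3] at e2
    rw [show mid - b = -h by rw [hmid, hh]; ring, show b - b = -(0:ℝ) by ring]
    exact e2.symm
  have hch : c = θ * ((m:ℝ)+1) * h := by rw [hc, hh]; push_cast; ring
  have hba : b - a = 2 * h := by rw [hh]; ring
  rw [hsplit, half1, half2, hba]
  clear_value mid h c K
  have hm1 : ((m:ℝ)+1) ≠ 0 := by positivity
  have hm2 : ((m:ℝ)+2) ≠ 0 := by positivity
  have hKne : K ≠ 0 := ne_of_gt hK0
  constructor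
  · intro hθn
    have hhc : h ≤ c := by
      push_cast at hθn
      rw [hch]
      nlinarith [hh0, hθn]
    rw [abs_int_ge m c h hh0.le hhc, hch]
    push_cast
    rw [← add_div]
    field_simp
    ring
  · intro hθn
    have hcc : c ≤ h := by
      rw [hch]
      push_cast at hθn
      nlinarith [hh0, hθn]
    rw [abs_int_lt m c h hc0 hcc]
    have hfac : (((m+1)+1).factorial : ℝ) = ((m:ℝ)+2) * K := by
      rw [hK, Nat.factorial_succ]; push_cast; ring
    have hhn : (h:ℝ) ≠ 0 := ne_of_gt hh0
    have hth : θ * ((m:ℝ)+1) = c / h := by rw [hch]; field_simp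
    push_cast [hfac]
    rw [hth, div_pow]
    field_simp
    ring
end

section
/- For every θ ∈ [0,1] and every integer n ≥ 1, the maximum of |G_n(x)| over x ∈ [a,b] equals: (θn-1)(b-a)^n/(n!·2^n) if θn > θ+1; θ^n (n-1)^{n-1} (b-a)^n/(n!·2^n) if 1 ≤ θn ≤ θ+1 and n > 1; max{1-θn, θ^n(n-1)^{n-1}} · (b-a)^n/(n!·2^n) if θn < 1 and n > 1; and max{1-θ, θ} · (b-a)/2 if n = 1. -/
open MeasureTheory intervalIntegral

section Aux
open Set

private lemma hasDerivAt_phi (c : ℝ) (k : ℕ) (x : ℝ) :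
    HasDerivAt (fun t : ℝ => t ^ k * (c - t))
      ((k : ℝ) * x ^ (k - 1) * (c - x) - x ^ k) x := by
  have h1 := (hasDerivAt_pow k x).mul ((hasDerivAt_const x c).sub (hasDerivAt_id x))
  exact h1.congr_deriv (by simp only [Pi.sub_apply, id]; ring)

private lemma mono_phi (c : ℝ) (k : ℕ) (hk : 1 ≤ k) (hc : 0 ≤ c) :
    MonotoneOn (fun t : ℝ => t ^ k * (c - t)) (Icc 0 ((k : ℝ) * c / (k + 1))) := by
  apply monotoneOn_of_deriv_nonneg (convex_Icc _ _) (Continuous.continuousOn (by continuity))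
  · intro x hx
    exact (hasDerivAt_phi c k x).differentiableAt.differentiableWithinAt
  · intro x hx
    rw [interior_Icc] at hx
    obtain ⟨hx0, hxu⟩ := hx
    rw [(hasDerivAt_phi c k x).deriv]
    have hxk : x ^ k = x ^ (k - 1) * x := by
      conv_lhs => rw [show k = (k - 1) + 1 by omega]
      ring
    have h2 : 0 ≤ (k : ℝ) * (c - x) - x := by
      have hp : (0:ℝ) < (k : ℝ) + 1 := by positivity
      rw [lt_div_iff₀ hp] at hxu
      nlinarith
    have h3 : (0:ℝ) ≤ x ^ (k - 1) := pow_nonneg hx0.le _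
    rw [hxk]
    nlinarith

private lemma anti_phi (c : ℝ) (k : ℕ) (hk : 1 ≤ k) (hc : 0 ≤ c) :
    AntitoneOn (fun t : ℝ => t ^ k * (c - t)) (Ici ((k : ℝ) * c / (k + 1))) := by
  apply antitoneOn_of_deriv_nonpos (convex_Ici _) (Continuous.continuousOn (by continuity))
  · intro x hx
    exact (hasDerivAt_phi c k x).differentiableAt.differentiableWithinAt
  · intro x hx
    rw [interior_Ici] at hx
    rw [(hasDerivAt_phi c k x).deriv]
    have hx0 : 0 ≤ x := le_trans (by positivity) hx.le
    have hxk : x ^ k = x ^ (k - 1) * x := by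
      conv_lhs => rw [show k = (k - 1) + 1 by omega]
      ring
    have h2 : (k : ℝ) * (c - x) - x ≤ 0 := by
      have hp : (0:ℝ) < (k : ℝ) + 1 := by positivity
      have hx' : (k : ℝ) * c / (k + 1) < x := hx
      rw [div_lt_iff₀ hp] at hx'
      nlinarith
    have h3 : (0:ℝ) ≤ x ^ (k - 1) := pow_nonneg hx0 _
    rw [hxk]
    nlinarith

private lemma phi_crit (c : ℝ) (k : ℕ) :
    ((k : ℝ) * c / (k + 1)) ^ k * (c - (k : ℝ) * c / (k + 1))
      = (k : ℝ) ^ k * (c / (k + 1)) ^ (k + 1) := by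
  have hp : ((k : ℝ) + 1) ≠ 0 := by positivity
  rw [show c - (k:ℝ) * c / (k+1) = c / (k+1) by field_simp; ring,
    mul_div_assoc, mul_pow, div_pow, div_pow, pow_succ, pow_succ]
  field_simp

private lemma phi_le (c : ℝ) (k : ℕ) (hk : 1 ≤ k) (hc : 0 ≤ c) {t : ℝ} (ht0 : 0 ≤ t) :
    t ^ k * (c - t) ≤ (k : ℝ) ^ k * (c / (k + 1)) ^ (k + 1) := by
  rw [← phi_crit c k]
  set s := (k : ℝ) * c / (k + 1) with hs
  have hs0 : 0 ≤ s := by positivity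
  rcases le_or_gt t s with h | h
  · exact mono_phi c k hk hc ⟨ht0, h⟩ ⟨hs0, le_refl s⟩ h
  · exact anti_phi c k hk hc (self_mem_Ici) h.le h.le

private lemma hpow_split (h : ℝ) (n : ℕ) (hn : 1 ≤ n) : h ^ n = h ^ (n - 1) * h := by
  conv_lhs => rw [show n = (n - 1) + 1 by omega]
  exact pow_succ _ _

private lemma abs_G_eq (a b θ : ℝ) (n : ℕ) {x : ℝ} (hx : x ∈ Icc a b) :
    ∃ t ∈ Icc (0:ℝ) ((b - a) / 2),
      |G a b θ n x| = t ^ (n - 1) * |t - θ * n * (b - a) / 2| / n.factorial := by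
  unfold G
  split_ifs with hxm
  · refine ⟨x - a, ⟨by linarith [hx.1], by linarith⟩, ?_⟩
    rw [abs_mul, abs_div, abs_pow, Nat.abs_cast,
      abs_of_nonneg (show (0:ℝ) ≤ x - a by linarith [hx.1])]
    ring
  · push_neg at hxm
    refine ⟨b - x, ⟨by linarith [hx.2], by linarith⟩, ?_⟩
    rw [abs_mul, abs_div, abs_pow, Nat.abs_cast,
      show |x - b| = b - x by rw [abs_of_nonpos (by linarith [hx.2])]; ring,
      show |x - b + θ * ↑n * (b - a) / 2| = |b - x - θ * ↑n * (b - a) / 2| by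
        rw [← abs_neg (x - b + θ * ↑n * (b - a) / 2)]; congr 1; ring]
    ring

private lemma isGreatest_aux (a b θ : ℝ) (n : ℕ) (B : ℝ)
    (key : ∀ t ∈ Icc (0:ℝ) ((b - a) / 2),
      t ^ (n - 1) * |t - θ * n * (b - a) / 2| ≤ B)
    {x₀ : ℝ} (hx₀ : x₀ ∈ Icc a b) (hval : |G a b θ n x₀| = B / n.factorial) :
    IsGreatest ((fun x => |G a b θ n x|) '' Icc a b) (B / n.factorial) := by
  constructor
  · exact ⟨x₀, hx₀, hval⟩
  · rintro y ⟨x, hx, rfl⟩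
    obtain ⟨t, ht, heq⟩ := abs_G_eq a b θ n hx
    show |G a b θ n x| ≤ B / n.factorial
    rw [heq]
    have hfac : (0:ℝ) < n.factorial := by exact_mod_cast n.factorial_pos
    exact (div_le_div_iff_of_pos_right hfac).mpr (key t ht)

private lemma G_at_mid (a b θ : ℝ) (n : ℕ) (hn : 1 ≤ n) (hab : a < b) :
    |G a b θ n ((a + b) / 2)| = |1 - θ * n| * ((b - a) / 2) ^ n / n.factorial := by
  have he : G a b θ n ((a + b) / 2)
      = (1 - θ * n) * ((b - a) / 2) ^ n / n.factorial := by
    unfold G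
    rw [if_pos le_rfl, show (a + b) / 2 - a = (b - a) / 2 by ring,
      hpow_split ((b - a) / 2) n hn]
    ring
  have hh : (0:ℝ) < (b - a) / 2 := by linarith
  rw [he, abs_div, abs_mul, Nat.abs_cast,
    abs_of_nonneg (show (0:ℝ) ≤ ((b - a) / 2) ^ n by positivity)]

private lemma G_at_crit (a b θ : ℝ) (n : ℕ) (hn : 1 ≤ n) (hab : a < b)
    (hθ0 : 0 ≤ θ) (hn1 : (1:ℝ) ≤ (n:ℝ)) (hle : θ * ((n:ℝ) - 1) ≤ 1) :
    |G a b θ n (a + θ * ((n:ℝ) - 1) * ((b - a) / 2))|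
      = θ ^ n * ((n:ℝ) - 1) ^ (n - 1) * ((b - a) / 2) ^ n / n.factorial := by
  have hh : (0:ℝ) < (b - a) / 2 := by linarith
  have he : G a b θ n (a + θ * ((n:ℝ) - 1) * ((b - a) / 2))
      = -(θ ^ n * ((n:ℝ) - 1) ^ (n - 1) * ((b - a) / 2) ^ n / n.factorial) := by
    unfold G
    rw [if_pos (by nlinarith),
      show a + θ * ((n:ℝ) - 1) * ((b - a) / 2) - a = θ * ((n:ℝ) - 1) * ((b - a) / 2) by ring,
      mul_pow, mul_pow, hpow_split θ n hn, hpow_split ((b - a) / 2) n hn]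
    ring
  have hX : (0:ℝ) ≤ θ ^ n * ((n:ℝ) - 1) ^ (n - 1) * ((b - a) / 2) ^ n / n.factorial := by
    apply div_nonneg _ (by positivity)
    exact mul_nonneg (mul_nonneg (by positivity) (pow_nonneg (by linarith) _)) (by positivity)
  rw [he, abs_neg, abs_of_nonneg hX]

private lemma amgm_part (a b θ : ℝ) (n : ℕ) (hab : a < b) (hθ0 : 0 ≤ θ)
    (hn2 : 2 ≤ n) {t : ℝ} (ht0 : 0 ≤ t) :
    t ^ (n - 1) * (θ * (n:ℝ) * (b - a) / 2 - t)
      ≤ θ ^ n * ((n:ℝ) - 1) ^ (n - 1) * ((b - a) / 2) ^ n := by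
  have hn1 : (1:ℝ) ≤ (n:ℝ) := by exact_mod_cast Nat.one_le_of_lt hn2
  have hn0 : (n:ℝ) ≠ 0 := by positivity
  have hc0 : 0 ≤ θ * (n:ℝ) * (b - a) / 2 :=
    div_nonneg (mul_nonneg (mul_nonneg hθ0 (Nat.cast_nonneg n)) (by linarith)) (by norm_num)
  have hkr : ((n - 1 : ℕ) : ℝ) = (n:ℝ) - 1 := by
    rw [Nat.cast_sub (by omega)]; norm_num
  have h := phi_le (θ * (n:ℝ) * (b - a) / 2) (n - 1) (by omega) hc0 ht0
  rw [show (n - 1) + 1 = n by omega, hkr] at h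
  calc t ^ (n - 1) * (θ * (n:ℝ) * (b - a) / 2 - t)
      ≤ ((n:ℝ) - 1) ^ (n - 1) * (θ * (n:ℝ) * (b - a) / 2 / ((n:ℝ) - 1 + 1)) ^ n := h
    _ = θ ^ n * ((n:ℝ) - 1) ^ (n - 1) * ((b - a) / 2) ^ n := by
        rw [show (n:ℝ) - 1 + 1 = (n:ℝ) by ring,
          show θ * (n:ℝ) * (b - a) / 2 / (n:ℝ) = θ * ((b - a) / 2) by field_simp,
          mul_pow]
        ring

private lemma key1 (a b θ : ℝ) (n : ℕ) (hab : a < b) (hθ0 : 0 ≤ θ)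
    (hn : 1 ≤ n) (h1 : θ + 1 < θ * (n:ℝ)) :
    ∀ t ∈ Icc (0:ℝ) ((b - a) / 2),
      t ^ (n - 1) * |t - θ * (n:ℝ) * (b - a) / 2| ≤ (θ * (n:ℝ) - 1) * ((b - a) / 2) ^ n := by
  intro t ht
  have hh : (0:ℝ) < (b - a) / 2 := by linarith
  have hn2 : 2 ≤ n := by
    by_contra hcon
    have : n = 1 := by omega
    subst this
    push_cast at h1; linarith
  have hn1 : (1:ℝ) ≤ (n:ℝ) := by exact_mod_cast hn
  have hθn1 : 1 < θ * ((n:ℝ) - 1) := by nlinarith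
  have hc0 : 0 ≤ θ * (n:ℝ) * (b - a) / 2 :=
    div_nonneg (mul_nonneg (mul_nonneg hθ0 (Nat.cast_nonneg n)) (by linarith)) (by norm_num)
  have hkr : ((n - 1 : ℕ) : ℝ) = (n:ℝ) - 1 := by
    rw [Nat.cast_sub (by omega)]; norm_num
  have hch : (b - a) / 2 ≤ θ * (n:ℝ) * (b - a) / 2 := by nlinarith
  rw [abs_of_nonpos (by linarith [ht.2]), neg_sub]
  have hmem2 : (b - a) / 2 ∈ Icc (0:ℝ)
      (((n - 1 : ℕ):ℝ) * (θ * (n:ℝ) * (b - a) / 2) / (((n - 1 : ℕ):ℝ) + 1)) := by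
    refine ⟨hh.le, ?_⟩
    rw [hkr, show (n:ℝ) - 1 + 1 = (n:ℝ) by ring, le_div_iff₀ (by linarith)]
    nlinarith [mul_nonneg (sub_nonneg.mpr hθn1.le)
      (mul_nonneg (by linarith : (0:ℝ) ≤ (n:ℝ)) hh.le)]
  have hmem1 : t ∈ Icc (0:ℝ)
      (((n - 1 : ℕ):ℝ) * (θ * (n:ℝ) * (b - a) / 2) / (((n - 1 : ℕ):ℝ) + 1)) :=
    ⟨ht.1, le_trans ht.2 hmem2.2⟩
  calc t ^ (n - 1) * (θ * (n:ℝ) * (b - a) / 2 - t)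
      ≤ ((b - a) / 2) ^ (n - 1) * (θ * (n:ℝ) * (b - a) / 2 - (b - a) / 2) :=
        mono_phi _ (n - 1) (by omega) hc0 hmem1 hmem2 ht.2
    _ = (θ * (n:ℝ) - 1) * ((b - a) / 2) ^ n := by
        rw [hpow_split ((b - a) / 2) n hn]
        ring

private lemma key2 (a b θ : ℝ) (n : ℕ) (hab : a < b) (hθ0 : 0 ≤ θ)
    (hn2 : 2 ≤ n) (hθn : 1 ≤ θ * (n:ℝ)) :
    ∀ t ∈ Icc (0:ℝ) ((b - a) / 2),
      t ^ (n - 1) * |t - θ * (n:ℝ) * (b - a) / 2|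
        ≤ θ ^ n * ((n:ℝ) - 1) ^ (n - 1) * ((b - a) / 2) ^ n := by
  intro t ht
  have hh : (0:ℝ) < (b - a) / 2 := by linarith
  have hch : (b - a) / 2 ≤ θ * (n:ℝ) * (b - a) / 2 := by nlinarith
  rw [abs_of_nonpos (by linarith [ht.2]), neg_sub]
  exact amgm_part a b θ n hab hθ0 hn2 ht.1

private lemma key3 (a b θ : ℝ) (n : ℕ) (hab : a < b) (hθ0 : 0 ≤ θ) (hn2 : 2 ≤ n) :
    ∀ t ∈ Icc (0:ℝ) ((b - a) / 2),
      t ^ (n - 1) * |t - θ * (n:ℝ) * (b - a) / 2|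
        ≤ max (1 - θ * (n:ℝ)) (θ ^ n * ((n:ℝ) - 1) ^ (n - 1)) * ((b - a) / 2) ^ n := by
  intro t ht
  have hh : (0:ℝ) < (b - a) / 2 := by linarith
  have hpown : (0:ℝ) ≤ ((b - a) / 2) ^ n := by positivity
  rcases le_or_gt t (θ * (n:ℝ) * (b - a) / 2) with hct | hct
  · rw [abs_of_nonpos (by linarith), neg_sub]
    calc t ^ (n - 1) * (θ * (n:ℝ) * (b - a) / 2 - t)
        ≤ θ ^ n * ((n:ℝ) - 1) ^ (n - 1) * ((b - a) / 2) ^ n :=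
          amgm_part a b θ n hab hθ0 hn2 ht.1
      _ ≤ max (1 - θ * (n:ℝ)) (θ ^ n * ((n:ℝ) - 1) ^ (n - 1)) * ((b - a) / 2) ^ n :=
          mul_le_mul_of_nonneg_right (le_max_right _ _) hpown
  · rw [abs_of_nonneg (by linarith)]
    calc t ^ (n - 1) * (t - θ * (n:ℝ) * (b - a) / 2)
        ≤ ((b - a) / 2) ^ (n - 1) * ((b - a) / 2 - θ * (n:ℝ) * (b - a) / 2) := by
          apply mul_le_mul (pow_le_pow_left₀ ht.1 ht.2 _) (by linarith [ht.2])
            (by linarith) (by positivity)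
      _ = (1 - θ * (n:ℝ)) * ((b - a) / 2) ^ n := by
          rw [hpow_split ((b - a) / 2) n (by omega)]
          ring
      _ ≤ max (1 - θ * (n:ℝ)) (θ ^ n * ((n:ℝ) - 1) ^ (n - 1)) * ((b - a) / 2) ^ n :=
          mul_le_mul_of_nonneg_right (le_max_left _ _) hpown

private lemma key4 (a b θ : ℝ) (hab : a < b) :
    ∀ t ∈ Icc (0:ℝ) ((b - a) / 2),
      t ^ (1 - 1) * |t - θ * ((1:ℕ):ℝ) * (b - a) / 2| ≤ max (1 - θ) θ * ((b - a) / 2) := by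
  intro t ht
  have hh : (0:ℝ) < (b - a) / 2 := by linarith
  rw [pow_zero, one_mul, abs_le]
  push_cast
  constructor
  · nlinarith [mul_le_mul_of_nonneg_right (le_max_right (1 - θ) θ) hh.le, ht.1]
  · nlinarith [mul_le_mul_of_nonneg_right (le_max_left (1 - θ) θ) hh.le, ht.2]

end Aux

theorem stmt3 (a b θ : ℝ) (n : ℕ)
    (hab : a < b) (hθ : θ ∈ Set.Icc (0 : ℝ) 1) (hn : 1 ≤ n) :
    (θ * (n : ℝ) > θ + 1 →
      IsGreatest ((fun x => |G a b θ n x|) '' Set.Icc a b)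
        ((θ * (n : ℝ) - 1) * (b - a) ^ n / ((n.factorial : ℝ) * 2 ^ n))) ∧
    (1 ≤ θ * (n : ℝ) ∧ θ * (n : ℝ) ≤ θ + 1 ∧ 1 < n →
      IsGreatest ((fun x => |G a b θ n x|) '' Set.Icc a b)
        (θ ^ n * ((n : ℝ) - 1) ^ (n - 1) * (b - a) ^ n / ((n.factorial : ℝ) * 2 ^ n))) ∧
    (θ * (n : ℝ) < 1 ∧ 1 < n →
      IsGreatest ((fun x => |G a b θ n x|) '' Set.Icc a b)
        (max (1 - θ * (n : ℝ)) (θ ^ n * ((n : ℝ) - 1) ^ (n - 1))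
          * (b - a) ^ n / ((n.factorial : ℝ) * 2 ^ n))) ∧
    (n = 1 →
      IsGreatest ((fun x => |G a b θ n x|) '' Set.Icc a b)
        (max (1 - θ) θ * (b - a) / 2)) := by
  obtain ⟨hθ0, hθ1⟩ := hθ
  have hh : (0:ℝ) < (b - a) / 2 := by linarith
  have hn1 : (1:ℝ) ≤ (n:ℝ) := by exact_mod_cast hn
  have hfac : (0:ℝ) < (n.factorial : ℝ) := by exact_mod_cast n.factorial_pos
  have hmid : (a + b) / 2 ∈ Set.Icc a b := ⟨by linarith, by linarith⟩
  refine ⟨?_, ?_, ?_, ?_⟩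
  · -- case 1 : θn > θ+1
    intro h1
    rw [show (θ * (n : ℝ) - 1) * (b - a) ^ n / ((n.factorial : ℝ) * 2 ^ n)
        = (θ * (n:ℝ) - 1) * ((b - a) / 2) ^ n / n.factorial by
      rw [div_pow]; ring]
    apply isGreatest_aux a b θ n _ (key1 a b θ n hab hθ0 hn h1) hmid
    rw [G_at_mid a b θ n hn hab, abs_of_nonpos (by linarith : 1 - θ * (n:ℝ) ≤ 0)]
    ring
  · -- case 2
    rintro ⟨h2a, h2b, h2c⟩
    have hn2 : 2 ≤ n := h2c
    rw [show θ ^ n * ((n : ℝ) - 1) ^ (n - 1) * (b - a) ^ n / ((n.factorial : ℝ) * 2 ^ n)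
        = θ ^ n * ((n:ℝ) - 1) ^ (n - 1) * ((b - a) / 2) ^ n / n.factorial by
      rw [div_pow]; ring]
    have hle : θ * ((n:ℝ) - 1) ≤ 1 := by nlinarith
    have hx₀ : a + θ * ((n:ℝ) - 1) * ((b - a) / 2) ∈ Set.Icc a b := by
      constructor
      · nlinarith [mul_nonneg (mul_nonneg hθ0 (by linarith : (0:ℝ) ≤ (n:ℝ) - 1)) hh.le]
      · nlinarith [mul_le_mul_of_nonneg_right hle hh.le]
    exact isGreatest_aux a b θ n _ (key2 a b θ n hab hθ0 hn2 h2a) hx₀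
      (G_at_crit a b θ n hn hab hθ0 hn1 hle)
  · -- case 3
    rintro ⟨h3a, h3b⟩
    have hn2 : 2 ≤ n := h3b
    rw [show max (1 - θ * (n : ℝ)) (θ ^ n * ((n : ℝ) - 1) ^ (n - 1))
          * (b - a) ^ n / ((n.factorial : ℝ) * 2 ^ n)
        = max (1 - θ * (n:ℝ)) (θ ^ n * ((n:ℝ) - 1) ^ (n - 1)) * ((b - a) / 2) ^ n
            / n.factorial by
      rw [div_pow]; ring]
    rcases le_total (θ ^ n * ((n:ℝ) - 1) ^ (n - 1)) (1 - θ * (n:ℝ)) with hm | hm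
    · apply isGreatest_aux a b θ n _ (key3 a b θ n hab hθ0 hn2) hmid
      rw [G_at_mid a b θ n hn hab, abs_of_nonneg (by linarith : (0:ℝ) ≤ 1 - θ * (n:ℝ)),
        max_eq_left hm]
    · have hle : θ * ((n:ℝ) - 1) ≤ 1 := by nlinarith
      have hx₀ : a + θ * ((n:ℝ) - 1) * ((b - a) / 2) ∈ Set.Icc a b := by
        constructor
        · nlinarith [mul_nonneg (mul_nonneg hθ0 (by linarith : (0:ℝ) ≤ (n:ℝ) - 1)) hh.le]
        · nlinarith [mul_le_mul_of_nonneg_right hle hh.le]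
      apply isGreatest_aux a b θ n _ (key3 a b θ n hab hθ0 hn2) hx₀
      rw [G_at_crit a b θ n hn hab hθ0 hn1 hle, max_eq_right hm]
  · -- case 4 : n = 1
    intro h4
    subst h4
    rw [show max (1 - θ) θ * (b - a) / 2
        = max (1 - θ) θ * ((b - a) / 2) / (Nat.factorial 1 : ℝ) by
      norm_num [Nat.factorial]; ring]
    rcases le_total θ (1 - θ) with hm | hm
    · apply isGreatest_aux a b θ 1 _ (key4 a b θ hab) hmid
      rw [G_at_mid a b θ 1 le_rfl hab, abs_of_nonneg (by push_cast; linarith : (0:ℝ) ≤ 1 - θ * ((1:ℕ):ℝ)),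
        max_eq_left hm]
      push_cast
      ring
    · apply isGreatest_aux a b θ 1 _ (key4 a b θ hab) (Set.left_mem_Icc.mpr hab.le)
      have he : G a b θ 1 a = -(θ * (b - a) / 2) := by
        unfold G
        rw [if_pos (by linarith)]
        norm_num
      rw [he, abs_neg, abs_of_nonneg (by nlinarith : (0:ℝ) ≤ θ * (b - a) / 2),
        max_eq_right hm]
      norm_num [Nat.factorial]
      ring
end

section
/- For every θ ∈ [0,1] and every integer m ≥ 1, the maximum over x ∈ [a,b] of |G_{2m}(x) - (1/(b-a)) ∫_a^b G_{2m}(t) dt| equals: max{θ - 1/(2m+1), θ(2m-1) - 2m/(2m+1)} · (b-a)^{2m}/((2m)!·2^{2m}) if θ(2m-1) ≥ 1; and max{|θ - 1/(2m+1)|, |θ(2m-1) - 2m/(2m+1)|, |θ - 1/(2m+1) - θ^{2m}(2m-1)^{2m-1}|} · (b-a)^{2m}/((2m)!·2^{2m}) if θ(2m-1) < 1. -/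
open MeasureTheory intervalIntegral

lemma G_cont (a b θ : ℝ) (m : ℕ) (hm : 1 ≤ m) : Continuous (G a b θ (2*m)) := by
  unfold G
  apply Continuous.if_le
  · fun_prop
  · fun_prop
  · exact continuous_id
  · exact continuous_const
  · intro x hx
    have hodd : Odd (2*m - 1) := ⟨m - 1, by omega⟩
    have h1 : x - b = -(x - a) := by linarith
    rw [h1, hodd.neg_pow]; ring

lemma G_left (a b θ : ℝ) (m : ℕ) (hm : 1 ≤ m) (x : ℝ) (hx : x ≤ (a+b)/2) :
    G a b θ (2*m) x =
      ((x-a)^(2*m) - θ*(2*m)*((b-a)/2)*(x-a)^(2*m-1)) / ((2*m).factorial : ℝ) := by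
  unfold G
  rw [if_pos hx]
  have e : (x-a)^(2*m) = (x-a)^(2*m-1) * (x-a) := by
    rw [← pow_succ, Nat.sub_add_cancel (by omega)]
  rw [e]; push_cast; ring

lemma G_refl (a b θ : ℝ) (m : ℕ) (hm : 1 ≤ m) (x : ℝ) :
    G a b θ (2*m) (a + b - x) = G a b θ (2*m) x := by
  have hodd : Odd (2*m - 1) := ⟨m - 1, by omega⟩
  unfold G
  rcases le_or_gt x ((a+b)/2) with h1 | h1 <;> rcases le_or_gt (a+b-x) ((a+b)/2) with h2 | h2
  · rw [if_pos h1, if_pos h2, show a + b - x = x by linarith]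
  · rw [if_pos h1, if_neg (not_le.mpr h2),
      show a + b - x - b = -(x - a) by ring, hodd.neg_pow]
    ring
  · rw [if_neg (not_le.mpr h1), if_pos h2,
      show a + b - x - a = -(x - b) by ring, hodd.neg_pow]
    ring
  · exfalso; linarith

lemma ipow (c d : ℝ) (k : ℕ) : ∫ t in c..d, (t - c)^k = (d-c)^(k+1)/(k+1) := by
  rw [intervalIntegral.integral_comp_sub_right (fun x => x^k) c, integral_pow]
  simp

lemma ipow2 (c d : ℝ) (k : ℕ) : ∫ t in c..d, (t - d)^k = -((c-d)^(k+1))/(k+1) := by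
  rw [intervalIntegral.integral_comp_sub_right (fun x => x^k) d, integral_pow]
  simp

lemma G_right (a b θ : ℝ) (m : ℕ) (hm : 1 ≤ m) (x : ℝ) (hx : (a+b)/2 ≤ x) :
    G a b θ (2*m) x =
      ((x-b)^(2*m) + θ*(2*m)*((b-a)/2)*(x-b)^(2*m-1)) / ((2*m).factorial : ℝ) := by
  have hodd : Odd (2*m - 1) := ⟨m - 1, by omega⟩
  have e : ∀ y : ℝ, (y:ℝ)^(2*m) = y^(2*m-1) * y := by
    intro y; rw [← pow_succ, Nat.sub_add_cancel (by omega)]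
  unfold G
  rcases eq_or_lt_of_le hx with h1 | h1
  · rw [if_pos h1.ge, show x - b = -(x-a) by linarith,
      Even.neg_pow ⟨m, by ring⟩, hodd.neg_pow, e (x-a)]
    push_cast; ring
  · rw [if_neg (not_le.mpr h1), e]; push_cast; ring

lemma G_integral (a b θ : ℝ) (m : ℕ) (hab : a < b) (hm : 1 ≤ m) :
    ∫ t in a..b, G a b θ (2*m) t
      = (1/(2*(m:ℝ)+1) - θ) * ((b-a)/2)^(2*m) * (b-a) / ((2*m).factorial : ℝ) := by
  set mid := (a+b)/2 with hmid
  have hc := G_cont a b θ m hm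
  have hF : ((2*m).factorial : ℝ) ≠ 0 := Nat.cast_ne_zero.mpr (Nat.factorial_ne_zero _)
  have hsplit : (∫ t in a..mid, G a b θ (2*m) t) + (∫ t in mid..b, G a b θ (2*m) t)
      = ∫ t in a..b, G a b θ (2*m) t :=
    integral_add_adjacent_intervals (hc.intervalIntegrable _ _) (hc.intervalIntegrable _ _)
  rw [← hsplit]
  have hL : (∫ t in a..mid, G a b θ (2*m) t)
      = ∫ t in a..mid, ((t-a)^(2*m) - θ*(2*m)*((b-a)/2)*(t-a)^(2*m-1)) / ((2*m).factorial : ℝ) := by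
    apply intervalIntegral.integral_congr
    intro t ht
    rw [Set.uIcc_of_le (by rw [hmid]; linarith)] at ht
    exact G_left a b θ m hm t ht.2
  have hR : (∫ t in mid..b, G a b θ (2*m) t)
      = ∫ t in mid..b, ((t-b)^(2*m) + θ*(2*m)*((b-a)/2)*(t-b)^(2*m-1)) / ((2*m).factorial : ℝ) := by
    apply intervalIntegral.integral_congr
    intro t ht
    rw [Set.uIcc_of_le (by rw [hmid]; linarith)] at ht
    exact G_right a b θ m hm t ht.1
  rw [hL, hR]
  have i1 : IntervalIntegrable (fun t : ℝ => (t-a)^(2*m)) volume a mid :=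
    (by fun_prop : Continuous _).intervalIntegrable _ _
  have i2 : IntervalIntegrable (fun t : ℝ => θ*(2*m)*((b-a)/2)*(t-a)^(2*m-1)) volume a mid :=
    (by fun_prop : Continuous _).intervalIntegrable _ _
  have i3 : IntervalIntegrable (fun t : ℝ => (t-b)^(2*m)) volume mid b :=
    (by fun_prop : Continuous _).intervalIntegrable _ _
  have i4 : IntervalIntegrable (fun t : ℝ => θ*(2*m)*((b-a)/2)*(t-b)^(2*m-1)) volume mid b :=
    (by fun_prop : Continuous _).intervalIntegrable _ _
  rw [intervalIntegral.integral_div, intervalIntegral.integral_div,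
      intervalIntegral.integral_sub i1 i2, intervalIntegral.integral_add i3 i4,
      intervalIntegral.integral_const_mul, intervalIntegral.integral_const_mul,
      ipow, ipow, ipow2, ipow2]
  have e1 : 2*m-1+1 = 2*m := by omega
  rw [e1]
  have e2 : ((2*m-1 : ℕ) : ℝ) = 2*(m:ℝ) - 1 := by
    push_cast [Nat.cast_sub (by omega : 1 ≤ 2*m)]; ring
  rw [e2]
  have hma : mid - a = (b-a)/2 := by rw [hmid]; ring
  have hmb : mid - b = -((b-a)/2) := by rw [hmid]; ring
  have he : (-((b-a)/2) : ℝ)^(2*m) = ((b-a)/2)^(2*m) := Even.neg_pow ⟨m, by ring⟩ _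
  have ho : (-((b-a)/2) : ℝ)^(2*m+1) = -(((b-a)/2)^(2*m+1)) := Odd.neg_pow ⟨m, by ring⟩ _
  rw [hma, hmb, ho, he]
  have hnum : (2*(m:ℝ)+1) ≠ 0 := by positivity
  have hnum2 : (2*(m:ℝ)-1) ≠ 0 := by
    have : (1:ℝ) ≤ m := by exact_mod_cast hm
    nlinarith
  have hp : ((b-a)/2)^(2*m+1) = ((b-a)/2)^(2*m) * ((b-a)/2) := by rw [pow_succ]
  rw [hp]
  push_cast
  field_simp
  ring

lemma P_hasDeriv (a b θ : ℝ) (m : ℕ) (hm : 1 ≤ m) (x : ℝ) :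
    HasDerivAt (fun y => (y-a)^(2*m) - θ*(2*m)*((b-a)/2)*(y-a)^(2*m-1))
      ((2*m : ℝ)*(x-a)^(2*m-2)*((x-a) - θ*(2*(m:ℝ)-1)*((b-a)/2))) x := by
  have h1 : HasDerivAt (fun y : ℝ => y - a) 1 x := (hasDerivAt_id x).sub_const a
  have hD := (h1.pow (2*m)).sub ((h1.pow (2*m-1)).const_mul (θ*(2*m)*((b-a)/2)))
  convert hD using 1
  case e'_4 => rfl
  case e'_5 => rfl
  case e'_8 => rfl
  have e4 : (x-a)^(2*m-1) = (x-a)^(2*m-2)*(x-a) := by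
    rw [← pow_succ]; congr 1; omega
  have e3 : 2*m-1-1 = 2*m-2 := by omega
  have e2 : ((2*m-1:ℕ):ℝ) = 2*(m:ℝ)-1 := by
    push_cast [Nat.cast_sub (by omega : 1 ≤ 2*m)]; ring
  rw [e3, e4, e2]; push_cast; ring

lemma P_anti (a b θ : ℝ) (m : ℕ) (hab : a < b) (hm : 1 ≤ m) :
    AntitoneOn (fun y => (y-a)^(2*m) - θ*(2*m)*((b-a)/2)*(y-a)^(2*m-1))
      (Set.Icc a (a + θ*(2*(m:ℝ)-1)*((b-a)/2))) := by
  apply antitoneOn_of_deriv_nonpos (convex_Icc _ _)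
  · exact Continuous.continuousOn (by fun_prop)
  · intro x hx
    exact (P_hasDeriv a b θ m hm x).differentiableAt.differentiableWithinAt
  · intro x hx
    rw [interior_Icc] at hx
    rw [(P_hasDeriv a b θ m hm x).deriv]
    have hxa : (0:ℝ) ≤ x - a := by linarith [hx.1]
    have hb : (x-a) - θ*(2*(m:ℝ)-1)*((b-a)/2) ≤ 0 := by linarith [hx.2]
    exact mul_nonpos_of_nonneg_of_nonpos (by positivity) hb

lemma P_mono (a b θ : ℝ) (m : ℕ) (hab : a < b) (hm : 1 ≤ m) (hθ : 0 ≤ θ) :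
    MonotoneOn (fun y => (y-a)^(2*m) - θ*(2*m)*((b-a)/2)*(y-a)^(2*m-1))
      (Set.Icc (a + θ*(2*(m:ℝ)-1)*((b-a)/2)) ((a+b)/2)) := by
  apply monotoneOn_of_deriv_nonneg (convex_Icc _ _)
  · exact Continuous.continuousOn (by fun_prop)
  · intro x hx
    exact (P_hasDeriv a b θ m hm x).differentiableAt.differentiableWithinAt
  · intro x hx
    rw [interior_Icc] at hx
    rw [(P_hasDeriv a b θ m hm x).deriv]
    have hth : 0 ≤ θ*(2*(m:ℝ)-1)*((b-a)/2) := by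
      have h1 : (1:ℝ) ≤ m := by exact_mod_cast hm
      have h2 : (0:ℝ) ≤ 2*(m:ℝ)-1 := by linarith
      exact mul_nonneg (mul_nonneg hθ h2) (by linarith)
    have hxa : (0:ℝ) ≤ x - a := by linarith [hx.1]
    have hb : 0 ≤ (x-a) - θ*(2*(m:ℝ)-1)*((b-a)/2) := by linarith [hx.1]
    exact mul_nonneg (by positivity) hb

lemma f_eval (a b θ : ℝ) (m : ℕ) (hab : a < b) (hm : 1 ≤ m) (x : ℝ) (hx : x ≤ (a+b)/2) :
    G a b θ (2*m) x - (1/(b-a)) * ∫ t in a..b, G a b θ (2*m) t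
    = (((x-a)^(2*m) - θ*(2*m)*((b-a)/2)*(x-a)^(2*m-1))
        - (1/(2*(m:ℝ)+1) - θ) * ((b-a)/2)^(2*m)) / ((2*m).factorial : ℝ) := by
  rw [G_left a b θ m hm x hx, G_integral a b θ m hab hm]
  have hba : b - a ≠ 0 := sub_ne_zero.mpr hab.ne'
  have hF : ((2*m).factorial : ℝ) ≠ 0 := Nat.cast_ne_zero.mpr (Nat.factorial_ne_zero _)
  field_simp

set_option maxHeartbeats 2000000 in
theorem stmt5 (a b θ : ℝ) (m : ℕ)
    (hab : a < b) (hθ : θ ∈ Set.Icc (0 : ℝ) 1) (hm : 1 ≤ m) :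
    (1 ≤ θ * (2 * (m : ℝ) - 1) →
      IsGreatest
        ((fun x => |G a b θ (2 * m) x - (1 / (b - a)) * ∫ t in a..b, G a b θ (2 * m) t|) ''
          Set.Icc a b)
        (max (θ - 1 / (2 * (m : ℝ) + 1))
            (θ * (2 * (m : ℝ) - 1) - 2 * (m : ℝ) / (2 * (m : ℝ) + 1))
          * (b - a) ^ (2 * m) / (((2 * m).factorial : ℝ) * 2 ^ (2 * m)))) ∧
    (θ * (2 * (m : ℝ) - 1) < 1 →
      IsGreatest
        ((fun x => |G a b θ (2 * m) x - (1 / (b - a)) * ∫ t in a..b, G a b θ (2 * m) t|) ''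
          Set.Icc a b)
        (max (max |θ - 1 / (2 * (m : ℝ) + 1)|
              |θ * (2 * (m : ℝ) - 1) - 2 * (m : ℝ) / (2 * (m : ℝ) + 1)|)
            |θ - 1 / (2 * (m : ℝ) + 1) - θ ^ (2 * m) * (2 * (m : ℝ) - 1) ^ (2 * m - 1)|
          * (b - a) ^ (2 * m) / (((2 * m).factorial : ℝ) * 2 ^ (2 * m)))) := by
  obtain ⟨hθ0, hθ1⟩ := hθ
  have hm' : (1:ℝ) ≤ m := by exact_mod_cast hm
  have hba : (0:ℝ) < b - a := sub_pos.mpr hab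
  have hba' : b - a ≠ 0 := hba.ne'
  have h2m1 : (0:ℝ) < 2*(m:ℝ)+1 := by linarith
  have hne : (2*(m:ℝ)+1) ≠ 0 := h2m1.ne'
  have hamid : a ≤ (a+b)/2 := by linarith
  have hmidb : (a+b)/2 ≤ b := by linarith
  set A := θ - 1/(2*(m:ℝ)+1) with hA
  set B := θ*(2*(m:ℝ)-1) - 2*(m:ℝ)/(2*(m:ℝ)+1) with hB
  set C := A - θ^(2*m)*(2*(m:ℝ)-1)^(2*m-1) with hC
  set Hp := ((b-a)/2)^(2*m) with hHpdef
  have hHp : (0:ℝ) < Hp := by rw [hHpdef]; positivity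
  set F := ((2*m).factorial : ℝ) with hFdef
  have hF0 : (0:ℝ) < F := by rw [hFdef]; exact_mod_cast (2*m).factorial_pos
  set xs := a + θ*(2*(m:ℝ)-1)*((b-a)/2) with hxs
  have hxs0 : a ≤ xs := by
    rw [hxs]
    nlinarith [mul_nonneg (mul_nonneg hθ0 (by linarith : (0:ℝ) ≤ 2*(m:ℝ)-1)) (by linarith : (0:ℝ) ≤ (b-a)/2)]
  clear_value A B C Hp F xs
  -- numerator evaluations
  have hPa : (a-a)^(2*m) - θ*(2*m)*((b-a)/2)*(a-a)^(2*m-1) = 0 := by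
    rw [sub_self, zero_pow (by omega : 2*m ≠ 0), zero_pow (by omega : 2*m-1 ≠ 0)]; ring
  have hPmid : ((a+b)/2-a)^(2*m) - θ*(2*m)*((b-a)/2)*((a+b)/2-a)^(2*m-1)
      = (1 - 2*(m:ℝ)*θ) * Hp := by
    rw [show (a+b)/2 - a = (b-a)/2 by ring, hHpdef,
      show ((b-a)/2)^(2*m) = ((b-a)/2)^(2*m-1) * ((b-a)/2) by
        rw [← pow_succ, Nat.sub_add_cancel (by omega)]]
    push_cast
    ring
  have hPxs : (xs-a)^(2*m) - θ*(2*m)*((b-a)/2)*(xs-a)^(2*m-1)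
      = -(θ^(2*m)*(2*(m:ℝ)-1)^(2*m-1)) * Hp := by
    rw [hxs, show a + θ*(2*(m:ℝ)-1)*((b-a)/2) - a = θ*(2*(m:ℝ)-1)*((b-a)/2) by ring]
    rw [show (θ*(2*(m:ℝ)-1)*((b-a)/2))^(2*m)
        = (θ*(2*(m:ℝ)-1)*((b-a)/2))^(2*m-1) * (θ*(2*(m:ℝ)-1)*((b-a)/2)) by
      rw [← pow_succ, Nat.sub_add_cancel (by omega)]]
    rw [mul_pow, mul_pow, hHpdef,
      show θ^(2*m) = θ^(2*m-1) * θ by rw [← pow_succ, Nat.sub_add_cancel (by omega)],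
      show ((b-a)/2)^(2*m) = ((b-a)/2)^(2*m-1) * ((b-a)/2) by
        rw [← pow_succ, Nat.sub_add_cancel (by omega)]]
    push_cast
    ring
  -- numerator constants rearrangements
  have hKA : (0:ℝ) - (1/(2*(m:ℝ)+1) - θ) * Hp = A * Hp := by rw [hA]; ring
  have hKB : (1 - 2*(m:ℝ)*θ)*Hp - (1/(2*(m:ℝ)+1) - θ) * Hp = -B*Hp := by
    rw [hB]; field_simp; ring
  have hKC : -(θ^(2*m)*(2*(m:ℝ)-1)^(2*m-1)) * Hp - (1/(2*(m:ℝ)+1) - θ) * Hp = C*Hp := by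
    rw [hC, hA]; ring
  -- function values
  have hfa : G a b θ (2*m) a - (1/(b-a)) * (∫ t in a..b, G a b θ (2*m) t) = A * Hp / F := by
    rw [f_eval a b θ m hab hm a (by linarith), ← hHpdef, ← hFdef, hPa, hKA]
  have hfmid : G a b θ (2*m) ((a+b)/2) - (1/(b-a)) * (∫ t in a..b, G a b θ (2*m) t)
      = -B * Hp / F := by
    rw [f_eval a b θ m hab hm _ (le_refl _), ← hHpdef, ← hFdef, hPmid, hKB]
  -- scale identity
  have hscale : ∀ M : ℝ, M * (b-a)^(2*m) / (F * 2^(2*m)) = M * Hp / F := by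
    intro M
    have h2 : ((2:ℝ))^(2*m) ≠ 0 := by positivity
    rw [hHpdef, div_pow, hFdef]
    rw [mul_div_assoc, mul_div_assoc, div_div,
      mul_comm ((2:ℝ)^(2*m)) (((2*m).factorial : ℝ))]
  have hPanti := P_anti a b θ m hab hm
  have hPmono := P_mono a b θ m hab hm hθ0
  rw [← hxs] at hPanti hPmono
  have hrefl : ∀ x ∈ Set.Icc a b, (a+b)/2 < x →
      G a b θ (2*m) x - (1/(b-a)) * (∫ t in a..b, G a b θ (2*m) t)
      = G a b θ (2*m) (a+b-x) - (1/(b-a)) * (∫ t in a..b, G a b θ (2*m) t) := by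
    intro x hx hx2
    rw [G_refl a b θ m hm x]
  constructor
  · -- case 1 : 1 ≤ θ (2m-1)
    intro hge
    have hA0 : 0 ≤ A := by
      have h1 : 1/(2*(m:ℝ)+1) ≤ θ := by rw [div_le_iff₀ h2m1]; nlinarith
      rw [hA]; linarith
    have hB0 : 0 ≤ B := by
      have h2 : 2*(m:ℝ)/(2*(m:ℝ)+1) ≤ 1 := by rw [div_le_one h2m1]; linarith
      rw [hB]; linarith
    have hmidstar : (a+b)/2 ≤ xs := by
      have h3 : 1*((b-a)/2) ≤ θ*(2*(m:ℝ)-1)*((b-a)/2) :=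
        mul_le_mul_of_nonneg_right hge (by linarith)
      rw [hxs]; linarith
    have key : ∀ x ∈ Set.Icc a ((a+b)/2),
        |G a b θ (2*m) x - (1/(b-a)) * (∫ t in a..b, G a b θ (2*m) t)| ≤ max A B * Hp / F := by
      intro x hx
      have hxmem : x ∈ Set.Icc a xs := ⟨hx.1, le_trans hx.2 hmidstar⟩
      have hamem : a ∈ Set.Icc a xs := ⟨le_refl a, hxs0⟩
      have hmidmem : (a+b)/2 ∈ Set.Icc a xs := ⟨hamid, hmidstar⟩
      have hup := hPanti hamem hxmem hx.1
      have hlo := hPanti hxmem hmidmem hx.2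
      simp only at hup hlo
      rw [f_eval a b θ m hab hm x hx.2, ← hHpdef, ← hFdef, abs_div, abs_of_pos hF0]
      apply (div_le_div_iff_of_pos_right hF0).mpr
      have hmax1 : A * Hp ≤ max A B * Hp := mul_le_mul_of_nonneg_right (le_max_left A B) hHp.le
      have hmax2 : B * Hp ≤ max A B * Hp := mul_le_mul_of_nonneg_right (le_max_right A B) hHp.le
      apply abs_le.mpr
      constructor
      · linarith [hlo, hPmid, hKB]
      · linarith [hup, hPa, hKA]
    constructor
    · rcases le_total B A with hBA | hAB
      · refine ⟨a, ⟨le_refl a, hab.le⟩, ?_⟩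
        simp only
        rw [hfa, hscale, max_eq_left hBA, abs_div, abs_of_pos hF0,
          abs_of_nonneg (mul_nonneg hA0 hHp.le)]
      · refine ⟨(a+b)/2, ⟨hamid, hmidb⟩, ?_⟩
        simp only
        rw [hfmid, hscale, max_eq_right hAB, abs_div, abs_of_pos hF0,
          abs_of_nonpos (by nlinarith : -B * Hp ≤ 0)]
        ring
    · rintro y ⟨x, hx, rfl⟩
      simp only
      rw [hscale]
      rcases le_or_gt x ((a+b)/2) with h | h
      · exact key x ⟨hx.1, h⟩
      · rw [hrefl x hx h]
        exact key _ ⟨by linarith [hx.2], by linarith⟩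
  · -- case 2 : θ (2m-1) < 1
    intro hlt
    have hfxs : G a b θ (2*m) xs - (1/(b-a)) * (∫ t in a..b, G a b θ (2*m) t) = C * Hp / F := by
      have h3 : θ*(2*(m:ℝ)-1)*((b-a)/2) ≤ 1*((b-a)/2) :=
        mul_le_mul_of_nonneg_right hlt.le (by linarith)
      rw [f_eval a b θ m hab hm xs (by rw [hxs]; linarith), ← hHpdef, ← hFdef, hPxs, hKC]
    have hxsmid : xs ≤ (a+b)/2 := by
      have h3 : θ*(2*(m:ℝ)-1)*((b-a)/2) ≤ 1*((b-a)/2) :=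
        mul_le_mul_of_nonneg_right hlt.le (by linarith)
      rw [hxs]; linarith
    have hAM : A ≤ max (max |A| |B|) |C| :=
      le_trans (le_abs_self A) (le_trans (le_max_left _ _) (le_max_left _ _))
    have hBM : -B ≤ max (max |A| |B|) |C| :=
      le_trans (neg_le_abs B) (le_trans (le_max_right _ _) (le_max_left _ _))
    have hCM : -(max (max |A| |B|) |C|) ≤ C := by
      have := neg_abs_le C
      have h2 : |C| ≤ max (max |A| |B|) |C| := le_max_right _ _
      linarith
    have key : ∀ x ∈ Set.Icc a ((a+b)/2),
        |G a b θ (2*m) x - (1/(b-a)) * (∫ t in a..b, G a b θ (2*m) t)|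
          ≤ max (max |A| |B|) |C| * Hp / F := by
      intro x hx
      rw [f_eval a b θ m hab hm x hx.2, ← hHpdef, ← hFdef, abs_div, abs_of_pos hF0]
      apply (div_le_div_iff_of_pos_right hF0).mpr
      have hmA : A * Hp ≤ max (max |A| |B|) |C| * Hp := mul_le_mul_of_nonneg_right hAM hHp.le
      have hmB : -B * Hp ≤ max (max |A| |B|) |C| * Hp := mul_le_mul_of_nonneg_right hBM hHp.le
      have hmC : -(max (max |A| |B|) |C|) * Hp ≤ C * Hp := mul_le_mul_of_nonneg_right hCM hHp.le
      have hxsm1 : xs ∈ Set.Icc a xs := ⟨hxs0, le_refl xs⟩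
      have hxsm2 : xs ∈ Set.Icc xs ((a+b)/2) := ⟨le_refl xs, hxsmid⟩
      apply abs_le.mpr
      rcases le_total x xs with hcase | hcase
      · have hxmem : x ∈ Set.Icc a xs := ⟨hx.1, hcase⟩
        have hamem : a ∈ Set.Icc a xs := ⟨le_refl a, hxs0⟩
        have hup := hPanti hamem hxmem hx.1
        have hlo := hPanti hxmem hxsm1 hcase
        simp only at hup hlo
        constructor
        · linarith [hPxs, hKC]
        · linarith [hPa, hKA]
      · have hxmem2 : x ∈ Set.Icc xs ((a+b)/2) := ⟨hcase, hx.2⟩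
        have hmidmem : (a+b)/2 ∈ Set.Icc xs ((a+b)/2) := ⟨hxsmid, le_refl _⟩
        have hlo := hPmono hxsm2 hxmem2 hcase
        have hup := hPmono hxmem2 hmidmem hx.2
        simp only at hup hlo
        constructor
        · linarith [hPxs, hKC]
        · linarith [hPmid, hKB]
    constructor
    · rcases le_total (max |A| |B|) |C| with h1 | h1
      · refine ⟨xs, ⟨hxs0, le_trans hxsmid hmidb⟩, ?_⟩
        simp only
        rw [hfxs, hscale, max_eq_right h1, abs_div, abs_of_pos hF0, abs_mul,
          abs_of_pos hHp]
      · rcases le_total |A| |B| with h2 | h2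
        · refine ⟨(a+b)/2, ⟨hamid, hmidb⟩, ?_⟩
          simp only
          rw [hfmid, hscale, max_eq_left h1, max_eq_right h2, abs_div, abs_of_pos hF0,
            abs_mul, abs_neg, abs_of_pos hHp]
        · refine ⟨a, ⟨le_refl a, hab.le⟩, ?_⟩
          simp only
          rw [hfa, hscale, max_eq_left h1, max_eq_left h2, abs_div, abs_of_pos hF0,
            abs_mul, abs_of_pos hHp]
    · rintro y ⟨x, hx, rfl⟩
      simp only
      rw [hscale]
      rcases le_or_gt x ((a+b)/2) with h | h
      · exact key x ⟨hx.1, h⟩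
      · rw [hrefl x hx h]
        exact key _ ⟨by linarith [hx.2], by linarith⟩
end

section
/- For every θ ∈ [0,1] and every integer n > 1, if f^{(n-1)} is absolutely continuous on [a,b] and f^{(n)} ∈ L¹[a,b], then |I - F_n| ≤ (b-a)^n/(n!·2^n) · ‖f^{(n)}‖₁ · K, where K = θn - 1 if θn > θ+1, K = θ^n(n-1)^{n-1} if 1 < θn ≤ θ+1, and K = max{1-θn, θ^n(n-1)^{n-1}} if θn ≤ 1, and ‖f^{(n)}‖₁ = ∫_a^b |f^{(n)}(x)| dx. -/
open MeasureTheory intervalIntegral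

open Set


/-- AM-GM: `x^(n-1) * y ≤ s^n` when `(n-1)x + y = n s`. -/
lemma amgm_pow {n : ℕ} (hn : 2 ≤ n) {x y s : ℝ} (hx : 0 ≤ x) (hy : 0 ≤ y)
    (hs : ((n : ℝ) - 1) * x + y = n * s) : x ^ (n - 1) * y ≤ s ^ n := by
  have hn0 : (0:ℝ) < n := by positivity
  have hw1 : (0:ℝ) ≤ ((n:ℝ) - 1) / n := by
    apply div_nonneg _ hn0.le
    have : (2:ℝ) ≤ n := by exact_mod_cast hn
    linarith
  have hw2 : (0:ℝ) ≤ 1 / n := by positivity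
  have hsum : ((n:ℝ) - 1) / n + 1 / n = 1 := by field_simp; ring
  have h := Real.geom_mean_le_arith_mean2_weighted hw1 hw2 hx hy hsum
  -- h : x ^ (((n:ℝ)-1)/n) * y ^ (1/n) ≤ ((n-1)/n) * x + (1/n) * y
  have hrhs : ((n:ℝ) - 1) / n * x + 1 / n * y = s := by
    field_simp
    linarith [hs]
  rw [hrhs] at h
  have hls : 0 ≤ s := le_trans (by positivity) h
  have h2 := pow_le_pow_left₀ (by positivity) h n
  calc x ^ (n - 1) * y = (x ^ (((n:ℝ) - 1) / n) * y ^ (1 / (n:ℝ))) ^ n := by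
        rw [mul_pow, ← Real.rpow_natCast (x ^ (((n:ℝ)-1)/n)) n,
          ← Real.rpow_natCast (y ^ (1/(n:ℝ))) n,
          ← Real.rpow_mul hx, ← Real.rpow_mul hy]
        rw [div_mul_cancel₀, one_div, inv_mul_cancel₀ hn0.ne']
        · rw [Real.rpow_one, ← Real.rpow_natCast x (n-1)]
          congr 1
          have : (2:ℝ) ≤ n := by exact_mod_cast hn
          push_cast [Nat.cast_sub (by omega : 1 ≤ n)]
          ring
        · exact hn0.ne'
    _ ≤ s ^ n := h2

/-- Young-type: `n * t^(n-1) ≤ 1 + (n-1) * t^n` for `t ≥ 0`. -/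
lemma young_pow {n : ℕ} (hn : 2 ≤ n) {t : ℝ} (ht : 0 ≤ t) :
    (n : ℝ) * t ^ (n - 1) ≤ 1 + ((n:ℝ) - 1) * t ^ n := by
  have hn0 : (0:ℝ) < n := by positivity
  have key := amgm_pow hn (x := t ^ n) (y := 1)
      (s := (((n:ℝ) - 1) * t ^ n + 1) / n) (by positivity) zero_le_one (by field_simp)
  -- (t^n)^(n-1) * 1 ≤ s^n
  have h1 : ((t ^ n) ^ (n-1) : ℝ) = (t ^ (n-1)) ^ n := by
    rw [← pow_mul, ← pow_mul, Nat.mul_comm]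
  rw [mul_one, h1] at key
  have hs : 0 ≤ (((n:ℝ) - 1) * t ^ n + 1) / n := by
    have h2n : (2:ℝ) ≤ n := by exact_mod_cast hn
    have : 0 ≤ ((n:ℝ) - 1) * t ^ n := by
      apply mul_nonneg (by linarith) (by positivity)
    positivity
  have := pow_le_pow_iff_left₀ (by positivity : (0:ℝ) ≤ t ^ (n-1)) hs (by omega : n ≠ 0)
  have h2 : t ^ (n - 1) ≤ (((n:ℝ) - 1) * t ^ n + 1) / n := this.mp key
  rw [le_div_iff₀ hn0] at h2
  nlinarith [h2]

lemma tbound_core {n : ℕ} (hn : 2 ≤ n) {θ t : ℝ} (ht0 : 0 ≤ t) (htn : t ≤ θ * n) :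
    t ^ (n - 1) * (θ * n - t) ≤ θ ^ n * ((n:ℝ) - 1) ^ (n - 1) := by
  have hn1 : (0:ℝ) < (n:ℝ) - 1 := by
    have : (2:ℝ) ≤ n := by exact_mod_cast hn
    linarith
  have key := amgm_pow hn (x := t / ((n:ℝ) - 1)) (y := θ * n - t) (s := θ)
    (by positivity) (by linarith) (by field_simp; ring)
  have hx : (t / ((n:ℝ) - 1)) ^ (n - 1) = t ^ (n-1) / ((n:ℝ)-1) ^ (n-1) := div_pow _ _ _
  rw [hx, div_mul_eq_mul_div, div_le_iff₀ (by positivity)] at key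
  linarith [key]

lemma tbound1 {n : ℕ} (hn : 2 ≤ n) {θ t : ℝ} (hθ0 : 0 ≤ θ) (hθ1 : θ ≤ 1) (hc : θ + 1 < θ * n)
    (ht0 : 0 ≤ t) (ht1 : t ≤ 1) : t ^ (n - 1) * |t - θ * n| ≤ θ * n - 1 := by
  have habs : |t - θ * n| = θ * n - t := by
    rw [abs_sub_comm, abs_of_nonneg]; linarith
  rw [habs]
  have hAB : t ^ n = t ^ (n - 1) * t := by
    rw [← pow_succ]; congr 1; omega
  have hA1 : t ^ (n-1) ≤ 1 := pow_le_one₀ ht0 ht1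
  have hy := young_pow hn ht0
  have hn1 : (0:ℝ) < (n:ℝ) - 1 := by
    have : (2:ℝ) ≤ n := by exact_mod_cast hn
    linarith
  have hfac : 0 ≤ (θ * ((n:ℝ) - 1) - 1) * ((n:ℝ) * (1 - t ^ (n-1))) := by
    apply mul_nonneg
    · nlinarith
    · have : (0:ℝ) ≤ n := by positivity
      nlinarith
  nlinarith [hy, hfac, hAB]

lemma tbound_master {n : ℕ} (hn : 2 ≤ n) {θ : ℝ} (hθ : θ ∈ Set.Icc (0:ℝ) 1) {K : ℝ}
    (hK : (θ + 1 < θ * n ∧ K = θ * n - 1)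
        ∨ (θ * n ≤ θ + 1 ∧ 1 < θ * n ∧ K = θ ^ n * ((n:ℝ) - 1) ^ (n - 1))
        ∨ (θ * n ≤ 1 ∧ K = max (1 - θ * n) (θ ^ n * ((n:ℝ) - 1) ^ (n - 1)))) :
    ∀ t ∈ Set.Icc (0:ℝ) 1, t ^ (n - 1) * |t - θ * n| ≤ K := by
  rintro t ⟨ht0, ht1⟩
  obtain ⟨h1, rfl⟩ | ⟨h1, h2, rfl⟩ | ⟨h1, rfl⟩ := hK
  · exact tbound1 hn hθ.1 hθ.2 h1 ht0 ht1
  · have habs : |t - θ * n| = θ * n - t := by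
      rw [abs_sub_comm, abs_of_nonneg]; linarith
    rw [habs]
    exact tbound_core hn ht0 (by linarith)
  · rcases le_total t (θ * n) with h | h
    · have habs : |t - θ * n| = θ * n - t := by
        rw [abs_sub_comm, abs_of_nonneg]; linarith
      rw [habs]
      exact le_trans (tbound_core hn ht0 h) (le_max_right _ _)
    · have habs : |t - θ * n| = t - θ * n := abs_of_nonneg (by linarith)
      rw [habs]
      refine le_trans ?_ (le_max_left _ _)
      have h0θn : 0 ≤ θ * n := by
        have : (0:ℝ) ≤ n := by positivity
        exact mul_nonneg hθ.1 this
      have := pow_le_one₀ ht0 ht1 (n := n - 1)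
      nlinarith [this, pow_nonneg ht0 (n-1)]


lemma fubini_tri {p q : ℝ} (hpq : p ≤ q) {g w : ℝ → ℝ}
    (hg : IntegrableOn g (Set.Ioc p q)) (hw : Continuous w) :
    ∫ t in Set.Ioc p q, (w t * ∫ x in Set.Ioc p t, g x)
      = ∫ x in Set.Ioc p q, (g x * ∫ t in Set.Ioc x q, w t) := by
  set μ := volume.restrict (Set.Ioc p q) with hμ
  have hwi : Integrable w μ := hw.integrableOn_Ioc
  have hprod : Integrable (fun z : ℝ × ℝ => g z.1 * w z.2) (μ.prod μ) :=
    hg.mul_prod hwi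
  have hS : MeasurableSet {z : ℝ × ℝ | z.1 ≤ z.2} :=
    measurableSet_le measurable_fst measurable_snd
  have hind : Integrable
      ({z : ℝ × ℝ | z.1 ≤ z.2}.indicator (fun z => g z.1 * w z.2)) (μ.prod μ) :=
    hprod.indicator hS
  have swap := MeasureTheory.integral_integral_swap
    (f := fun x y => {z : ℝ × ℝ | z.1 ≤ z.2}.indicator (fun z => g z.1 * w z.2) (x, y))
    (μ := μ) (ν := μ) hind
  have hL : (∫ x, ∫ y, {z : ℝ × ℝ | z.1 ≤ z.2}.indicator (fun z => g z.1 * w z.2) (x, y) ∂μ ∂μ)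
      = ∫ x in Set.Ioc p q, (g x * ∫ t in Set.Ioc x q, w t) := by
    rw [hμ]
    apply setIntegral_congr_fun measurableSet_Ioc
    intro x hx
    dsimp only
    have h1 : (fun y => {z : ℝ × ℝ | z.1 ≤ z.2}.indicator (fun z => g z.1 * w z.2) (x, y))
        = (Set.Ici x).indicator (fun y => g x * w y) := by
      funext y
      by_cases h : x ≤ y
      · rw [Set.indicator_of_mem (by exact h) , Set.indicator_of_mem (by exact h)]
      · rw [Set.indicator_of_notMem (by exact h), Set.indicator_of_notMem (by exact h)]
    rw [h1, MeasureTheory.integral_indicator measurableSet_Ici, Measure.restrict_restrict measurableSet_Ici]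
    have h2 : Set.Ici x ∩ Set.Ioc p q = Set.Icc x q := by
      ext y
      simp only [Set.mem_inter_iff, Set.mem_Ici, Set.mem_Ioc, Set.mem_Icc]
      constructor
      · rintro ⟨h3, h4, h5⟩; exact ⟨h3, h5⟩
      · rintro ⟨h3, h4⟩; exact ⟨h3, lt_of_lt_of_le hx.1 h3, h4⟩
    rw [h2, integral_Icc_eq_integral_Ioc, MeasureTheory.integral_const_mul]
  have hR : (∫ y, ∫ x, {z : ℝ × ℝ | z.1 ≤ z.2}.indicator (fun z => g z.1 * w z.2) (x, y) ∂μ ∂μ)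
      = ∫ t in Set.Ioc p q, (w t * ∫ x in Set.Ioc p t, g x) := by
    rw [hμ]
    apply setIntegral_congr_fun measurableSet_Ioc
    intro y hy
    dsimp only
    have h1 : (fun x => {z : ℝ × ℝ | z.1 ≤ z.2}.indicator (fun z => g z.1 * w z.2) (x, y))
        = (Set.Iic y).indicator (fun x => g x * w y) := by
      funext x
      by_cases h : x ≤ y
      · rw [Set.indicator_of_mem (by exact h), Set.indicator_of_mem (by exact h)]
      · rw [Set.indicator_of_notMem (by exact h), Set.indicator_of_notMem (by exact h)]
    rw [h1, MeasureTheory.integral_indicator measurableSet_Iic, Measure.restrict_restrict measurableSet_Iic]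
    have h2 : Set.Iic y ∩ Set.Ioc p q = Set.Ioc p y := by
      ext x
      simp only [Set.mem_inter_iff, Set.mem_Iic, Set.mem_Ioc]
      constructor
      · rintro ⟨h3, h4, h5⟩; exact ⟨h4, h3⟩
      · rintro ⟨h3, h4⟩; exact ⟨h4, h3, le_trans h4 hy.2⟩
    rw [h2, MeasureTheory.integral_mul_const, mul_comm]
  rw [← hL, ← hR, swap]

lemma ibp_primitive {a b p q : ℝ} (hpq : p ≤ q) (hap : a ≤ p) (hqb : q ≤ b)
    {u u' v g : ℝ → ℝ}
    (hu : ∀ x, HasDerivAt u (u' x) x) (hu'c : Continuous u')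
    (hg : IntervalIntegrable g volume a b)
    (hv : ∀ x ∈ Set.Icc a b, v x = v a + ∫ t in a..x, g t) :
    ∫ x in p..q, u x * g x = u q * v q - u p * v p - ∫ x in p..q, u' x * v x := by
  have hab : a ≤ b := le_trans (le_trans hap hpq) hqb
  have huc : Continuous u := by
    rw [continuous_iff_continuousAt]; exact fun x => (hu x).continuousAt
  have hsub : ∀ x ∈ Set.Icc p q, Set.uIcc p x ⊆ Set.uIcc a b := by
    intro x hx
    rw [Set.uIcc_of_le hx.1, Set.uIcc_of_le hab]
    exact Set.Icc_subset_Icc hap (le_trans hx.2 hqb)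
  have hqmem : q ∈ Set.Icc p q := ⟨hpq, le_refl q⟩
  have hgpq : IntervalIntegrable g volume p q := hg.mono_set (hsub q hqmem)
  set V : ℝ → ℝ := fun x => ∫ t in p..x, g t with hV
  have hvp : ∀ x ∈ Set.Icc p q, v x = v p + V x := by
    intro x hx
    have hxab : x ∈ Set.Icc a b := ⟨le_trans hap hx.1, le_trans hx.2 hqb⟩
    have h1 := hv x hxab
    have h2 := hv p ⟨hap, le_trans hpq hqb⟩
    have hadd : (∫ t in a..p, g t) + (∫ t in p..x, g t) = ∫ t in a..x, g t :=
      integral_add_adjacent_intervals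
        (hg.mono_set (by rw [Set.uIcc_of_le hap, Set.uIcc_of_le hab]
                         exact Set.Icc_subset_Icc le_rfl (le_trans hpq hqb)))
        (hg.mono_set (hsub x hx))
    rw [h1, h2, hV]
    dsimp only
    linarith [hadd]
  have hVcont : ContinuousOn V (Set.Icc p q) := by
    have := intervalIntegral.continuousOn_primitive_interval' hgpq Set.left_mem_uIcc
    rwa [Set.uIcc_of_le hpq] at this
  -- step 1
  have hu'int : IntervalIntegrable u' volume p q := hu'c.intervalIntegrable _ _
  have hu'V : IntervalIntegrable (fun x => u' x * V x) volume p q := by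
    apply ContinuousOn.intervalIntegrable
    rw [Set.uIcc_of_le hpq]
    exact hu'c.continuousOn.mul hVcont
  have step1 : (∫ x in p..q, u' x * v x) = v p * (u q - u p) + ∫ x in p..q, u' x * V x := by
    have hcongr : ∀ x ∈ Set.uIcc p q, u' x * v x = u' x * v p + u' x * V x := by
      intro x hx
      rw [hvp x (by rwa [Set.uIcc_of_le hpq] at hx)]; ring
    rw [integral_congr hcongr, integral_add (f := fun x => u' x * v p) ((hu'c.mul continuous_const).intervalIntegrable _ _) hu'V]
    congr 1
    rw [intervalIntegral.integral_mul_const,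
      integral_eq_sub_of_hasDerivAt (fun x _ => hu x) hu'int]
    ring
  -- step 2 via Fubini
  have hgIoc : IntegrableOn g (Set.Ioc p q) := by
    have := hgpq.def'; rwa [Set.uIoc_of_le hpq] at this
  have hug : IntervalIntegrable (fun x => u x * g x) volume p q :=
    hgpq.continuousOn_mul (huc.continuousOn)
  have step2 : (∫ x in p..q, u' x * V x) = u q * V q - ∫ x in p..q, u x * g x := by
    rw [integral_of_le hpq]
    have e1 : (∫ x in Set.Ioc p q, u' x * V x)
        = ∫ t in Set.Ioc p q, (u' t * ∫ x in Set.Ioc p t, g x) := by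
      apply setIntegral_congr_fun measurableSet_Ioc
      intro x hx
      show u' x * (∫ t in p..x, g t) = u' x * ∫ x in Set.Ioc p x, g x
      rw [integral_of_le hx.1.le]
    rw [e1, fubini_tri hpq hgIoc hu'c]
    have e2 : (∫ x in Set.Ioc p q, (g x * ∫ t in Set.Ioc x q, u' t))
        = ∫ x in Set.Ioc p q, (u q * g x - u x * g x) := by
      apply setIntegral_congr_fun measurableSet_Ioc
      intro x hx
      dsimp only
      rw [← integral_of_le hx.2, integral_eq_sub_of_hasDerivAt (fun t _ => hu t)
        (hu'c.intervalIntegrable _ _)]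
      ring
    have hugIoc : IntegrableOn (fun x => u x * g x) (Set.Ioc p q) := by
      have := hug.def'; rwa [Set.uIoc_of_le hpq] at this
    rw [e2, MeasureTheory.integral_sub (hgIoc.const_mul _) hugIoc,
      MeasureTheory.integral_const_mul, ← integral_of_le hpq,
      ← integral_of_le (f := fun x => u x * g x) hpq]
  have hvq := hvp q hqmem
  rw [hvq]
  linarith [step1, step2]


noncomputable def PP (e d : ℝ) (j : ℕ) (x : ℝ) : ℝ :=
  (x - e) ^ j / (j.factorial : ℝ) + d * (x - e) ^ (j - 1) / ((j - 1).factorial : ℝ)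

lemma PP_cont (e d : ℝ) (j : ℕ) : Continuous (PP e d j) := by
  unfold PP
  exact (((continuous_id.sub continuous_const).pow j).div_const _).add
    ((continuous_const.mul ((continuous_id.sub continuous_const).pow (j-1))).div_const _)

lemma hasDerivAt_shifted_pow (e : ℝ) (k : ℕ) (x : ℝ) :
    HasDerivAt (fun y => (y - e) ^ k) ((k : ℝ) * (x - e) ^ (k - 1)) x := by
  simpa [Function.comp_def] using (hasDerivAt_pow k (x - e)).comp x ((hasDerivAt_id x).sub_const e)

lemma hasDerivAt_PP (e d : ℝ) {j : ℕ} (hj : 2 ≤ j) (x : ℝ) :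
    HasDerivAt (PP e d j) (PP e d (j - 1) x) x := by
  obtain ⟨i, rfl⟩ : ∃ i, j = i + 2 := ⟨j - 2, by omega⟩
  have h1 := hasDerivAt_shifted_pow e (i + 2) x
  have h2 := hasDerivAt_shifted_pow e (i + 1) x
  have h := (h1.div_const ((i + 2).factorial : ℝ)).add
    ((h2.const_mul d).div_const ((i + 1).factorial : ℝ))
  have heq : ((i + 2 : ℕ) : ℝ) * (x - e) ^ (i + 2 - 1) / ((i + 2).factorial : ℝ)
      + d * (((i + 1 : ℕ) : ℝ) * (x - e) ^ (i + 1 - 1)) / ((i + 1).factorial : ℝ)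
      = PP e d (i + 2 - 1) x := by
    show _ = PP e d (i + 1) x
    unfold PP
    have e1 : ((i + 2).factorial : ℝ) = ((i : ℝ) + 2) * ((i + 1).factorial : ℝ) := by
      rw [show i + 2 = (i + 1) + 1 by ring, Nat.factorial_succ]; push_cast; ring
    have e2 : ((i + 1).factorial : ℝ) = ((i : ℝ) + 1) * ((i).factorial : ℝ) := by
      rw [Nat.factorial_succ]; push_cast; ring
    have hf1 : ((i + 1).factorial : ℝ) ≠ 0 := by positivity
    have hf0 : ((i).factorial : ℝ) ≠ 0 := by positivity
    simp only [Nat.add_sub_cancel]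
    rw [e1, e2]
    push_cast
    field_simp
  rw [heq] at h
  exact h

lemma hasDerivAt_PP_one (e d : ℝ) (x : ℝ) : HasDerivAt (PP e d 1) 1 x := by
  have : PP e d 1 = fun y => (y - e) + d := by
    funext y; simp [PP]
  rw [this]
  exact ((hasDerivAt_id x).sub_const e).add_const d

lemma expansion {a b : ℝ} (e d : ℝ) {p q : ℝ} {n : ℕ} {f : ℝ → ℝ} (hn : 1 < n)
    (hab : a ≤ b) (hp : p ∈ Set.Icc a b) (hq : q ∈ Set.Icc a b) (hpq : p ≤ q)
    (hd : ∀ k < n - 1, ∀ x ∈ Set.Icc a b,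
      HasDerivAt (iteratedDeriv k f) (iteratedDeriv (k + 1) f x) x)
    (hcont : ContinuousOn (iteratedDeriv (n - 1) f) (Set.Icc a b))
    (hint : IntervalIntegrable (iteratedDeriv n f) volume a b)
    (hftc : ∀ x ∈ Set.Icc a b,
      iteratedDeriv (n - 1) f x
        = iteratedDeriv (n - 1) f a + ∫ t in a..x, iteratedDeriv n f t) :
    ∫ x in p..q, PP e d n x * iteratedDeriv n f x
      = (∑ k ∈ Finset.Icc 1 n, (-1:ℝ) ^ (n - k) *
          (PP e d k q * iteratedDeriv (k - 1) f q - PP e d k p * iteratedDeriv (k - 1) f p))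
        + (-1:ℝ) ^ n * ∫ x in p..q, f x := by
  have hc : ∀ k, k ≤ n - 1 → ContinuousOn (iteratedDeriv k f) (Set.Icc a b) := by
    intro k hk
    rcases eq_or_lt_of_le hk with rfl | h
    · exact hcont
    · exact fun x hx => ((hd k h x hx).continuousAt).continuousWithinAt
  have hsubIcc : Set.uIcc p q ⊆ Set.Icc a b := by
    rw [Set.uIcc_of_le hpq]; exact Set.Icc_subset_Icc hp.1 hq.2
  have key : ∀ j, 1 ≤ j → j ≤ n - 1 →
      ∫ x in p..q, PP e d j x * iteratedDeriv j f x
        = (∑ k ∈ Finset.Icc 1 j, (-1:ℝ) ^ (j - k) *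
            (PP e d k q * iteratedDeriv (k - 1) f q - PP e d k p * iteratedDeriv (k - 1) f p))
          + (-1:ℝ) ^ j * ∫ x in p..q, f x := by
    intro j
    induction j with
    | zero => omega
    | succ i ih =>
      intro _ hj
      rcases Nat.eq_zero_or_pos i with rfl | hi
      · -- base case j = 1
        have hres := integral_mul_deriv_eq_deriv_mul
          (u := PP e d 1) (u' := fun _ => (1:ℝ)) (v := f) (v' := iteratedDeriv 1 f)
          (a := p) (b := q)
          (fun x _ => hasDerivAt_PP_one e d x)
          (fun x hx => by
            have := hd 0 (by omega) x (hsubIcc hx)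
            simpa [iteratedDeriv_zero] using this)
          intervalIntegrable_const
          (((hc 1 (by omega)).mono hsubIcc).intervalIntegrable)
        rw [hres]
        simp only [Finset.Icc_self, Finset.sum_singleton, iteratedDeriv_zero,
          Nat.sub_self, pow_zero, one_mul, pow_one]
        ring
      · -- step case
        have hres := integral_mul_deriv_eq_deriv_mul
          (u := PP e d (i + 1)) (u' := PP e d i) (v := iteratedDeriv i f)
          (v' := iteratedDeriv (i + 1) f) (a := p) (b := q)
          (fun x _ => by
            have := hasDerivAt_PP e d (show 2 ≤ i + 1 by omega) x
            simpa [Nat.add_sub_cancel] using this)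
          (fun x hx => hd i (by omega) x (hsubIcc hx))
          ((PP_cont e d i).intervalIntegrable _ _)
          (((hc (i + 1) (by omega)).mono hsubIcc).intervalIntegrable)
        rw [hres, ih hi (by omega)]
        rw [Finset.sum_Icc_succ_top (show 1 ≤ i + 1 by omega)]
        have hsgn : ∀ k ∈ Finset.Icc 1 i,
            (-1:ℝ) ^ (i + 1 - k) *
              (PP e d k q * iteratedDeriv (k - 1) f q - PP e d k p * iteratedDeriv (k - 1) f p)
            = -((-1:ℝ) ^ (i - k) *
              (PP e d k q * iteratedDeriv (k - 1) f q - PP e d k p * iteratedDeriv (k - 1) f p)) := by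
          intro k hk
          rw [Finset.mem_Icc] at hk
          rw [show i + 1 - k = (i - k) + 1 by omega, pow_succ]
          ring
        rw [Finset.sum_congr rfl hsgn, Finset.sum_neg_distrib]
        simp only [Nat.sub_self, pow_zero, one_mul, Nat.add_sub_cancel]
        rw [pow_succ]
        ring
  -- top step: j = n via ibp_primitive
  obtain ⟨N, rfl⟩ : ∃ N, n = N + 1 := ⟨n - 1, by omega⟩
  have hN : 1 ≤ N := by omega
  have hmain := ibp_primitive (a := a) (b := b) hpq hp.1 hq.2
    (u := PP e d (N + 1)) (u' := PP e d N) (v := iteratedDeriv N f)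
    (g := iteratedDeriv (N + 1) f)
    (fun x => by
      have := hasDerivAt_PP e d (show 2 ≤ N + 1 by omega) x
      simpa [Nat.add_sub_cancel] using this)
    (PP_cont e d N) hint
    (by simpa [Nat.add_sub_cancel] using hftc)
  rw [hmain, key N hN (by omega)]
  rw [Finset.sum_Icc_succ_top (show 1 ≤ N + 1 by omega)]
  have hsgn : ∀ k ∈ Finset.Icc 1 N,
      (-1:ℝ) ^ (N + 1 - k) *
        (PP e d k q * iteratedDeriv (k - 1) f q - PP e d k p * iteratedDeriv (k - 1) f p)
      = -((-1:ℝ) ^ (N - k) *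
        (PP e d k q * iteratedDeriv (k - 1) f q - PP e d k p * iteratedDeriv (k - 1) f p)) := by
    intro k hk
    rw [Finset.mem_Icc] at hk
    rw [show N + 1 - k = (N - k) + 1 by omega, pow_succ]
    ring
  rw [Finset.sum_congr rfl hsgn, Finset.sum_neg_distrib]
  simp only [Nat.sub_self, pow_zero, one_mul, Nat.add_sub_cancel]
  rw [pow_succ]
  ring

lemma kernel_bound {a b θ : ℝ} {n : ℕ} (hab : a < b) (hn : 1 ≤ n) {K : ℝ}
    (hK : ∀ t ∈ Set.Icc (0:ℝ) 1, t ^ (n - 1) * |t - θ * n| ≤ K) :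
    ∀ x ∈ Set.Icc a b, |G a b θ n x| ≤ (b - a) ^ n / ((n.factorial : ℝ) * 2 ^ n) * K := by
  intro x hx
  obtain ⟨N, rfl⟩ : ∃ N, n = N + 1 := ⟨n - 1, by omega⟩
  simp only [Nat.add_sub_cancel] at hK
  push_cast at hK
  obtain ⟨h, hh⟩ : ∃ h : ℝ, h = (b - a) / 2 := ⟨_, rfl⟩
  have hh0 : 0 < h := by rw [hh]; linarith
  have hba : b - a = 2 * h := by rw [hh]; ring
  have hfac : ((N + 1).factorial : ℝ) ≠ 0 := by positivity
  have hC : (b - a) ^ (N+1) / (((N+1).factorial : ℝ) * 2 ^ (N+1))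
      = h ^ (N+1) / ((N+1).factorial : ℝ) := by
    rw [hba, mul_pow]
    field_simp
  have habs : ∀ t : ℝ, t ∈ Set.Icc (0:ℝ) 1 →
      h ^ (N+1) / (((N+1).factorial : ℝ)) * (t ^ N * |t - θ * ((N:ℝ)+1)|)
        ≤ (b - a) ^ (N+1) / (((N+1).factorial : ℝ) * 2 ^ (N+1)) * K := by
    intro t ht
    rw [hC]
    exact mul_le_mul_of_nonneg_left (hK t ht) (by positivity)
  unfold G
  simp only [Nat.add_sub_cancel]
  push_cast
  split_ifs with hxm
  · obtain ⟨t, htd⟩ : ∃ t : ℝ, t = (x - a) / h := ⟨_, rfl⟩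
    have ht : t ∈ Set.Icc (0:ℝ) 1 := by
      rw [htd]
      constructor
      · apply div_nonneg _ hh0.le; linarith [hx.1]
      · rw [div_le_one hh0]; rw [hh]; linarith [hxm]
    have hxa : x - a = t * h := by rw [htd]; field_simp
    have hval : (x - a) ^ N / (((N+1).factorial : ℝ)) * (x - a - θ * ((N:ℝ)+1) * (b - a) / 2)
        = h ^ (N+1) / (((N+1).factorial : ℝ)) * (t ^ N * (t - θ * ((N:ℝ)+1))) := by
      rw [hxa, hba]
      field_simp
      ring
    rw [hval, abs_mul, abs_of_nonneg (div_nonneg (pow_nonneg hh0.le _) (by positivity) : (0:ℝ) ≤ h ^ (N+1) / (((N+1).factorial : ℝ))),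
      abs_mul, abs_of_nonneg (pow_nonneg (ht.1) N)]
    exact habs t ht
  · push_neg at hxm
    obtain ⟨t, htd⟩ : ∃ t : ℝ, t = (b - x) / h := ⟨_, rfl⟩
    have ht : t ∈ Set.Icc (0:ℝ) 1 := by
      rw [htd]
      constructor
      · apply div_nonneg _ hh0.le; linarith [hx.2]
      · rw [div_le_one hh0]; rw [hh]; linarith [hxm]
    have hxb : x - b = -(t * h) := by
      have hne := hh0.ne'
      rw [htd]; field_simp; ring
    have hval : (x - b) ^ N / (((N+1).factorial : ℝ)) * (x - b + θ * ((N:ℝ)+1) * (b - a) / 2)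
        = (-1) ^ (N+1) * (h ^ (N+1) / (((N+1).factorial : ℝ)) * (t ^ N * (t - θ * ((N:ℝ)+1)))) := by
      rw [hxb, hba, neg_pow (t * h) N]
      field_simp
      ring
    rw [hval, abs_mul, abs_pow, abs_neg, abs_one, one_pow, one_mul,
      abs_mul, abs_of_nonneg (div_nonneg (pow_nonneg hh0.le _) (by positivity) : (0:ℝ) ≤ h ^ (N+1) / (((N+1).factorial : ℝ))),
      abs_mul, abs_of_nonneg (pow_nonneg (ht.1) N)]
    exact habs t ht

lemma main_est (a b θ : ℝ) (n : ℕ) (f : ℝ → ℝ)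
    (hab : a < b) (hθ : θ ∈ Set.Icc (0 : ℝ) 1) (hn : 1 < n)
    (hd : ∀ k < n - 1, ∀ x ∈ Set.Icc a b,
      HasDerivAt (iteratedDeriv k f) (iteratedDeriv (k + 1) f x) x)
    (hcont : ContinuousOn (iteratedDeriv (n - 1) f) (Set.Icc a b))
    (hint : IntervalIntegrable (iteratedDeriv n f) volume a b)
    (hftc : ∀ x ∈ Set.Icc a b,
      iteratedDeriv (n - 1) f x
        = iteratedDeriv (n - 1) f a + ∫ t in a..x, iteratedDeriv n f t)
    {K : ℝ} (hK : ∀ t ∈ Set.Icc (0:ℝ) 1, t ^ (n - 1) * |t - θ * n| ≤ K) :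
    |(∫ x in a..b, f x) - quadF a b θ n f|
      ≤ (b - a) ^ n / ((n.factorial : ℝ) * 2 ^ n)
        * (∫ x in a..b, |iteratedDeriv n f x|) * K := by
  have hm1 : a ≤ (a + b) / 2 := by linarith
  have hm2 : (a + b) / 2 ≤ b := by linarith
  have hK0 : 0 ≤ K := by
    have := hK 0 ⟨le_refl 0, zero_le_one⟩
    simpa [zero_pow (show n - 1 ≠ 0 by omega)] using this
  -- continuity of derivatives
  have hcf : ∀ k, k ≤ n - 1 → ContinuousOn (iteratedDeriv k f) (Set.Icc a b) := by
    intro k hk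
    rcases eq_or_lt_of_le hk with rfl | h
    · exact hcont
    · exact fun x hx => ((hd k h x hx).continuousAt).continuousWithinAt
  have hfint : IntervalIntegrable f volume a b := by
    have h0 := hcf 0 (by omega)
    rw [iteratedDeriv_zero] at h0
    apply ContinuousOn.intervalIntegrable
    rwa [Set.uIcc_of_le hab.le]
  obtain ⟨N, rfl⟩ : ∃ N, n = N + 1 := ⟨n - 1, by omega⟩
  have hN1 : 1 ≤ N := by omega
  have hfacne : ∀ j : ℕ, ((j.factorial : ℝ)) ≠ 0 := fun j => by positivity
  -- branch identities
  have hL : ∀ x : ℝ, (x - a) ^ (N + 1 - 1) / (((N+1).factorial : ℝ)) *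
      (x - a - θ * ((N+1 : ℕ) : ℝ) * (b - a) / 2) = PP a (-(θ * (b - a) / 2)) (N+1) x := by
    intro x
    unfold PP
    simp only [Nat.add_sub_cancel]
    have hfs : (((N+1).factorial : ℝ)) = ((N:ℝ)+1) * ((N.factorial : ℝ)) := by
      rw [Nat.factorial_succ]; push_cast; ring
    rw [hfs]
    push_cast
    field_simp
    ring
  have hR : ∀ x : ℝ, (x - b) ^ (N + 1 - 1) / (((N+1).factorial : ℝ)) *
      (x - b + θ * ((N+1 : ℕ) : ℝ) * (b - a) / 2) = PP b (θ * (b - a) / 2) (N+1) x := by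
    intro x
    unfold PP
    simp only [Nat.add_sub_cancel]
    have hfs : (((N+1).factorial : ℝ)) = ((N:ℝ)+1) * ((N.factorial : ℝ)) := by
      rw [Nat.factorial_succ]; push_cast; ring
    rw [hfs]
    push_cast
    field_simp
    ring
  -- integrability of G * f^(n)
  have hGmeas : Measurable (G a b θ (N+1)) := by
    unfold G
    apply Measurable.ite measurableSet_Iic
    · fun_prop
    · fun_prop
  have hGbdd := kernel_bound hab (by omega : 1 ≤ N + 1) hK
  have hC0 : 0 ≤ (b - a) ^ (N+1) / (((N+1).factorial : ℝ) * 2 ^ (N+1)) * K := by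
    have : (0:ℝ) < b - a := by linarith
    positivity
  have hGfint : IntervalIntegrable
      (fun x => G a b θ (N+1) x * iteratedDeriv (N+1) f x) volume a b := by
    rw [intervalIntegrable_iff, Set.uIoc_of_le hab.le]
    apply Integrable.bdd_mul (c := (b - a) ^ (N+1) / (((N+1).factorial : ℝ) * 2 ^ (N+1)) * K)
    · have := hint.def'
      rwa [Set.uIoc_of_le hab.le] at this
    · exact hGmeas.aestronglyMeasurable
    · rw [ae_restrict_iff' measurableSet_Ioc]
      apply Filter.Eventually.of_forall
      intro x hx
      simpa [Real.norm_eq_abs] using hGbdd x (Set.Ioc_subset_Icc_self hx)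
  -- split the integral and rewrite branches
  have hsubL : Set.uIcc a ((a+b)/2) ⊆ Set.uIcc a b := by
    rw [Set.uIcc_of_le hm1, Set.uIcc_of_le hab.le]
    exact Set.Icc_subset_Icc le_rfl hm2
  have hsubR : Set.uIcc ((a+b)/2) b ⊆ Set.uIcc a b := by
    rw [Set.uIcc_of_le hm2, Set.uIcc_of_le hab.le]
    exact Set.Icc_subset_Icc hm1 le_rfl
  have hGadd : (∫ x in a..b, G a b θ (N+1) x * iteratedDeriv (N+1) f x)
      = (∫ x in a..(a+b)/2, G a b θ (N+1) x * iteratedDeriv (N+1) f x)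
        + ∫ x in ((a+b)/2)..b, G a b θ (N+1) x * iteratedDeriv (N+1) f x :=
    (integral_add_adjacent_intervals (hGfint.mono_set hsubL) (hGfint.mono_set hsubR)).symm
  have hfadd : (∫ x in a..(a+b)/2, f x) + (∫ x in ((a+b)/2)..b, f x) = ∫ x in a..b, f x :=
    integral_add_adjacent_intervals (hfint.mono_set hsubL) (hfint.mono_set hsubR)
  have hIleft : (∫ x in a..(a+b)/2, G a b θ (N+1) x * iteratedDeriv (N+1) f x)
      = ∫ x in a..(a+b)/2, PP a (-(θ * (b - a) / 2)) (N+1) x * iteratedDeriv (N+1) f x := by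
    apply integral_congr
    intro x hx
    rw [Set.uIcc_of_le hm1] at hx
    unfold G
    beta_reduce
    rw [if_pos hx.2, hL x]
  have hIright : (∫ x in ((a+b)/2)..b, G a b θ (N+1) x * iteratedDeriv (N+1) f x)
      = ∫ x in ((a+b)/2)..b, PP b (θ * (b - a) / 2) (N+1) x * iteratedDeriv (N+1) f x := by
    apply intervalIntegral.integral_congr_ae
    apply Filter.Eventually.of_forall
    intro x hx
    rw [Set.uIoc_of_le hm2] at hx
    unfold G
    rw [if_neg (not_le.2 hx.1), hR x]
  have hexpL := expansion (a := a) (b := b) a (-(θ * (b - a) / 2))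
    (p := a) (q := (a+b)/2) hn hab.le ⟨le_refl a, hab.le⟩ ⟨hm1, hm2⟩ hm1 hd hcont hint hftc
  have hexpR := expansion (a := a) (b := b) b (θ * (b - a) / 2)
    (p := (a+b)/2) (q := b) hn hab.le ⟨hm1, hm2⟩ ⟨hab.le, le_refl b⟩ hm2 hd hcont hint hftc
  -- the boundary sum computation
  have hsum : (∑ k ∈ Finset.Icc 1 (N+1), (-1:ℝ) ^ (N+1-k) *
        (PP a (-(θ * (b - a) / 2)) k ((a+b)/2) * iteratedDeriv (k - 1) f ((a+b)/2)
          - PP a (-(θ * (b - a) / 2)) k a * iteratedDeriv (k - 1) f a))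
      + (∑ k ∈ Finset.Icc 1 (N+1), (-1:ℝ) ^ (N+1-k) *
        (PP b (θ * (b - a) / 2) k b * iteratedDeriv (k - 1) f b
          - PP b (θ * (b - a) / 2) k ((a+b)/2) * iteratedDeriv (k - 1) f ((a+b)/2)))
      = (-1:ℝ) ^ N * quadF a b θ (N+1) f := by
    have e1 : (a+b)/2 - a = (b-a)/2 := by ring
    have e2 : (a+b)/2 - b = -((b-a)/2) := by ring
    rw [← Finset.sum_add_distrib]
    have hterm : ∀ k ∈ Finset.Icc 1 (N+1),
        ((-1:ℝ)^(N+1-k) * (PP a (-(θ*(b-a)/2)) k ((a+b)/2) * iteratedDeriv (k-1) f ((a+b)/2)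
            - PP a (-(θ*(b-a)/2)) k a * iteratedDeriv (k-1) f a)
          + (-1:ℝ)^(N+1-k) * (PP b (θ*(b-a)/2) k b * iteratedDeriv (k-1) f b
            - PP b (θ*(b-a)/2) k ((a+b)/2) * iteratedDeriv (k-1) f ((a+b)/2)))
        = ((-1:ℝ)^(N+1-k) * ((PP a (-(θ*(b-a)/2)) k ((a+b)/2)
              - PP b (θ*(b-a)/2) k ((a+b)/2)) * iteratedDeriv (k-1) f ((a+b)/2)))
          + ((-1:ℝ)^(N+1-k) * (PP b (θ*(b-a)/2) k b * iteratedDeriv (k-1) f b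
            - PP a (-(θ*(b-a)/2)) k a * iteratedDeriv (k-1) f a)) := fun k _ => by ring
    rw [Finset.sum_congr rfl hterm, Finset.sum_add_distrib]
    have hEnd : (∑ k ∈ Finset.Icc 1 (N+1), (-1:ℝ)^(N+1-k) *
          (PP b (θ*(b-a)/2) k b * iteratedDeriv (k-1) f b
            - PP a (-(θ*(b-a)/2)) k a * iteratedDeriv (k-1) f a))
        = (-1:ℝ)^N * ((θ*(b-a)/2) * f b + (θ*(b-a)/2) * f a) := by
      rw [Finset.sum_eq_single_of_mem 1 (Finset.mem_Icc.mpr ⟨le_rfl, by omega⟩)]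
      · have hb : PP b (θ*(b-a)/2) 1 b = θ*(b-a)/2 := by unfold PP; norm_num
        have ha : PP a (-(θ*(b-a)/2)) 1 a = -(θ*(b-a)/2) := by unfold PP; norm_num
        rw [hb, ha]
        simp only [Nat.sub_self, iteratedDeriv_zero, Nat.add_sub_cancel]
        ring
      · intro k hk hk1
        rw [Finset.mem_Icc] at hk
        have hb : PP b (θ*(b-a)/2) k b = 0 := by
          unfold PP
          rw [sub_self, zero_pow (by omega : k ≠ 0), zero_pow (by omega : k - 1 ≠ 0)]
          simp
        have ha : PP a (-(θ*(b-a)/2)) k a = 0 := by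
          unfold PP
          rw [sub_self, zero_pow (by omega : k ≠ 0), zero_pow (by omega : k - 1 ≠ 0)]
          simp
        rw [hb, ha]
        ring
    rw [hEnd]
    have heven : ∀ k, k ≠ 0 → Even k →
        PP a (-(θ*(b-a)/2)) k ((a+b)/2) - PP b (θ*(b-a)/2) k ((a+b)/2) = 0 := by
      intro k hk0 hk
      have hodd : Odd (k-1) := Nat.Even.sub_odd (by omega) hk odd_one
      unfold PP
      rw [e1, e2, Even.neg_pow hk, Odd.neg_pow hodd]
      ring
    have hfilter : ∑ k ∈ (Finset.Icc 1 (N+1)).filter (fun k => k % 2 = 1),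
          ((-1:ℝ)^(N+1-k) * ((PP a (-(θ*(b-a)/2)) k ((a+b)/2)
              - PP b (θ*(b-a)/2) k ((a+b)/2)) * iteratedDeriv (k-1) f ((a+b)/2)))
        = ∑ k ∈ Finset.Icc 1 (N+1),
          ((-1:ℝ)^(N+1-k) * ((PP a (-(θ*(b-a)/2)) k ((a+b)/2)
              - PP b (θ*(b-a)/2) k ((a+b)/2)) * iteratedDeriv (k-1) f ((a+b)/2))) := by
      apply Finset.sum_filter_of_ne
      intro k hk hne
      rw [Finset.mem_Icc] at hk
      by_contra hnotodd
      have hkeven : Even k := Nat.even_iff.mpr (by omega)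
      exact hne (by rw [heven k (by omega) hkeven]; ring)
    rw [← hfilter]
    have hbij : ∑ k ∈ (Finset.Icc 1 (N+1)).filter (fun k => k % 2 = 1),
          ((-1:ℝ)^(N+1-k) * ((PP a (-(θ*(b-a)/2)) k ((a+b)/2)
              - PP b (θ*(b-a)/2) k ((a+b)/2)) * iteratedDeriv (k-1) f ((a+b)/2)))
        = ∑ i ∈ Finset.Icc 0 (N/2), (-1:ℝ)^N *
            ((1 - θ * (2 * (i : ℝ) + 1)) * (b - a) ^ (2 * i + 1)
              / (((2 * i + 1).factorial : ℝ) * 2 ^ (2 * i)) * iteratedDeriv (2 * i) f ((a + b) / 2)) := by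
      apply Finset.sum_nbij' (i := fun k => (k-1)/2) (j := fun i => 2*i+1)
      · intro k hk
        simp only [Finset.mem_filter, Finset.mem_Icc] at hk
        simp only [Finset.mem_Icc]
        omega
      · intro i hi
        simp only [Finset.mem_Icc] at hi
        simp only [Finset.mem_filter, Finset.mem_Icc]
        omega
      · intro k hk
        simp only [Finset.mem_filter, Finset.mem_Icc] at hk
        omega
      · intro i hi
        simp only [Finset.mem_Icc] at hi
        omega
      · intro k hk
        simp only [Finset.mem_filter, Finset.mem_Icc] at hk
        obtain ⟨i, rfl⟩ : ∃ i, k = 2*i+1 := ⟨k/2, by omega⟩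
        have h2i : 2*i ≤ N := by omega
        simp only [Nat.add_sub_cancel, show (2*i)/2 = i by omega]
        have hev : ((-1:ℝ))^(2*i) = 1 := Even.neg_one_pow ⟨i, by ring⟩
        have hsgn : ((-1:ℝ))^(N+1-(2*i+1)) = (-1:ℝ)^N := by
          calc ((-1:ℝ))^(N+1-(2*i+1))
              = (-1:ℝ)^(N+1-(2*i+1)) * ((-1:ℝ)^(2*i)) := by
                rw [hev, mul_one]
            _ = (-1:ℝ)^(N+1-(2*i+1)+2*i) := by rw [← pow_add]
            _ = (-1:ℝ)^N := by congr 1; omega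
        have hdiff : PP a (-(θ*(b-a)/2)) (2*i+1) ((a+b)/2)
              - PP b (θ*(b-a)/2) (2*i+1) ((a+b)/2)
            = (1 - θ * (2 * (i : ℝ) + 1)) * (b - a) ^ (2 * i + 1)
              / (((2 * i + 1).factorial : ℝ) * 2 ^ (2 * i)) := by
          unfold PP
          rw [e1, e2]
          simp only [Nat.add_sub_cancel]
          have ho : (-((b-a)/2))^(2*i+1) = -((b-a)/2)^(2*i+1) :=
            Odd.neg_pow ⟨i, by ring⟩ _
          have he : (-((b-a)/2))^(2*i) = ((b-a)/2)^(2*i) :=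
            Even.neg_pow ⟨i, by ring⟩ _
          rw [ho, he]
          have hfs : (((2*i+1).factorial : ℝ)) = (2*(i:ℝ)+1) * (((2*i).factorial : ℝ)) := by
            rw [Nat.factorial_succ]; push_cast; ring
          rw [hfs]
          have hf0 : (((2*i).factorial : ℝ)) ≠ 0 := by positivity
          have h21 : (2:ℝ)*(i:ℝ)+1 ≠ 0 := by positivity
          simp only [div_pow]
          field_simp
          ring
        rw [hdiff, hsgn]
    rw [hbij, ← Finset.mul_sum]
    have hins : Finset.Icc 0 (N/2) = insert 0 (Finset.Icc 1 (N/2)) := by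
      ext x; simp only [Finset.mem_Icc, Finset.mem_insert]; omega
    rw [hins, Finset.sum_insert (by simp)]
    unfold quadF
    simp only [Nat.add_sub_cancel]
    have hW0 : (1 - θ * (2 * ((0:ℕ) : ℝ) + 1)) * (b - a) ^ (2 * 0 + 1)
        / (((2 * 0 + 1).factorial : ℝ) * 2 ^ (2 * 0)) * iteratedDeriv (2 * 0) f ((a + b) / 2)
        = (1 - θ) * (b - a) * f ((a+b)/2) := by
      norm_num [iteratedDeriv_zero]
    rw [hW0]
    ring
  -- assemble the identity
  have hid2 : (∫ x in a..b, G a b θ (N+1) x * iteratedDeriv (N+1) f x)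
      = (-1:ℝ)^N * quadF a b θ (N+1) f + (-1:ℝ)^(N+1) * ∫ x in a..b, f x := by
    rw [hGadd, hIleft, hIright, hexpL, hexpR, ← hfadd]
    linarith [hsum]
  have h1 : (-1:ℝ)^(N+1) * (-1:ℝ)^N = -1 := by
    rw [← pow_add]; exact Odd.neg_one_pow ⟨N, by ring⟩
  have h2 : (-1:ℝ)^(N+1) * (-1:ℝ)^(N+1) = 1 := by
    rw [← pow_add]; exact Even.neg_one_pow ⟨N+1, by ring⟩
  have hiden : (∫ x in a..b, f x) - quadF a b θ (N+1) f
      = (-1:ℝ)^(N+1) * ∫ x in a..b, G a b θ (N+1) x * iteratedDeriv (N+1) f x := by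
    rw [hid2]
    linear_combination (-(∫ x in a..b, f x)) * h2 + (-(quadF a b θ (N+1) f)) * h1
  -- final estimate
  rw [hiden, abs_mul, abs_pow, abs_neg, abs_one, one_pow, one_mul]
  have step1 : |∫ x in a..b, G a b θ (N+1) x * iteratedDeriv (N+1) f x|
      ≤ ∫ x in a..b, |G a b θ (N+1) x * iteratedDeriv (N+1) f x| :=
    intervalIntegral.abs_integral_le_integral_abs hab.le
  have step2 : (∫ x in a..b, |G a b θ (N+1) x * iteratedDeriv (N+1) f x|)
      ≤ ∫ x in a..b, (b - a) ^ (N+1) / (((N+1).factorial : ℝ) * 2 ^ (N+1)) * K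
          * |iteratedDeriv (N+1) f x| := by
    apply integral_mono_on hab.le hGfint.abs ((hint.abs).const_mul _)
    intro x hx
    rw [abs_mul]
    exact mul_le_mul_of_nonneg_right (hGbdd x hx) (abs_nonneg _)
  have step3 : (∫ x in a..b, (b - a) ^ (N+1) / (((N+1).factorial : ℝ) * 2 ^ (N+1)) * K
      * |iteratedDeriv (N+1) f x|)
      = (b - a) ^ (N+1) / (((N+1).factorial : ℝ) * 2 ^ (N+1))
        * (∫ x in a..b, |iteratedDeriv (N+1) f x|) * K := by
    rw [intervalIntegral.integral_const_mul]
    ring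
  linarith [step1, step2, le_of_eq step3]

theorem stmt6 (a b θ : ℝ) (n : ℕ) (f : ℝ → ℝ)
    (hab : a < b) (hθ : θ ∈ Set.Icc (0 : ℝ) 1) (hn : 1 < n)
    (hd : ∀ k < n - 1, ∀ x ∈ Set.Icc a b,
      HasDerivAt (iteratedDeriv k f) (iteratedDeriv (k + 1) f x) x)
    (hcont : ContinuousOn (iteratedDeriv (n - 1) f) (Set.Icc a b))
    (hint : IntervalIntegrable (iteratedDeriv n f) volume a b)
    (hftc : ∀ x ∈ Set.Icc a b,
      iteratedDeriv (n - 1) f x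
        = iteratedDeriv (n - 1) f a + ∫ t in a..x, iteratedDeriv n f t)
    :
    (θ * (n : ℝ) > θ + 1 →
      |(∫ x in a..b, f x) - quadF a b θ n f|
        ≤ (b - a) ^ n / ((n.factorial : ℝ) * 2 ^ n)
          * (∫ x in a..b, |iteratedDeriv n f x|) * (θ * (n : ℝ) - 1)) ∧
    (1 < θ * (n : ℝ) ∧ θ * (n : ℝ) ≤ θ + 1 →
      |(∫ x in a..b, f x) - quadF a b θ n f|
        ≤ (b - a) ^ n / ((n.factorial : ℝ) * 2 ^ n)
          * (∫ x in a..b, |iteratedDeriv n f x|) * (θ ^ n * ((n : ℝ) - 1) ^ (n - 1))) ∧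
    (θ * (n : ℝ) ≤ 1 →
      |(∫ x in a..b, f x) - quadF a b θ n f|
        ≤ (b - a) ^ n / ((n.factorial : ℝ) * 2 ^ n)
          * (∫ x in a..b, |iteratedDeriv n f x|)
          * max (1 - θ * (n : ℝ)) (θ ^ n * ((n : ℝ) - 1) ^ (n - 1))) := by
  have h2n : 2 ≤ n := by omega
  refine ⟨?_, ?_, ?_⟩
  · intro h
    exact main_est a b θ n f hab hθ hn hd hcont hint hftc
      (tbound_master h2n hθ (Or.inl ⟨h, rfl⟩))
  · rintro ⟨h1, h2⟩
    exact main_est a b θ n f hab hθ hn hd hcont hint hftc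
      (tbound_master h2n hθ (Or.inr (Or.inl ⟨h2, h1, rfl⟩)))
  · intro h
    exact main_est a b θ n f hab hθ hn hd hcont hint hftc
      (tbound_master h2n hθ (Or.inr (Or.inr ⟨h, rfl⟩)))
end

section
/- For every θ ∈ [0,1] and every integer n ≥ 1, if f : [a,b] → ℝ is n-times continuously differentiable with ‖f^{(n)}‖_∞ = sup_{x∈(a,b)} |f^{(n)}(x)| < ∞, then |I - F_n| ≤ (b-a)^{n+1}/((n+1)!·2^n) · ‖f^{(n)}‖_∞ · K, where K = θ(n+1) - 1 if θn ≥ 1, and K = 2θ^{n+1}n^n - θ(n+1) + 1 if 0 ≤ θn < 1. -/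
open MeasureTheory intervalIntegral

open MeasureTheory intervalIntegral

noncomputable def Pker (a b θ : ℝ) (k : ℕ) (x : ℝ) : ℝ :=
  (x - a) ^ (k - 1) / (k.factorial : ℝ) * (x - a - θ * k * (b - a) / 2)

noncomputable def Qker (a b θ : ℝ) (k : ℕ) (x : ℝ) : ℝ :=
  (x - b) ^ (k - 1) / (k.factorial : ℝ) * (x - b + θ * k * (b - a) / 2)

lemma Pker_cont (a b θ : ℝ) (k : ℕ) : Continuous (Pker a b θ k) := by
  unfold Pker; fun_prop

lemma Qker_cont (a b θ : ℝ) (k : ℕ) : Continuous (Qker a b θ k) := by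
  unfold Qker; fun_prop

lemma shift_hasDerivAt (c C D : ℝ) (p : ℕ) (x : ℝ) :
    HasDerivAt (fun x => (x - c) ^ (p + 1) / C * (x - c - D))
      ((p + 1 : ℝ) * (x - c) ^ p / C * (x - c - D) + (x - c) ^ (p + 1) / C) x := by
  have h1 : HasDerivAt (fun x : ℝ => (x - c) ^ (p + 1)) ((p + 1 : ℝ) * (x - c) ^ p) x := by
    simpa [Function.comp_def] using ((hasDerivAt_pow (p + 1) (x - c)).comp x ((hasDerivAt_id x).sub_const c))
  have h2 : HasDerivAt (fun x : ℝ => x - c - D) 1 x :=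
    ((hasDerivAt_id x).sub_const c).sub_const D
  simpa [mul_one, Pi.mul_def] using (h1.div_const C).mul h2

lemma Pker_hasDerivAt (a b θ : ℝ) (p : ℕ) (x : ℝ) :
    HasDerivAt (Pker a b θ (p + 2)) (Pker a b θ (p + 1) x) x := by
  have h := shift_hasDerivAt a ((p + 2).factorial : ℝ) (θ * (p + 2) * (b - a) / 2) p x
  have he : Pker a b θ (p + 2) = fun x =>
      (x - a) ^ (p + 1) / ((p + 2).factorial : ℝ) * (x - a - θ * (p + 2) * (b - a) / 2) := by
    funext y; simp [Pker]
  rw [he]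
  convert h using 1
  have h2 : ((p + 2).factorial : ℝ) = (p + 2) * ((p + 1).factorial : ℝ) := by
    rw [Nat.factorial_succ]; push_cast; ring
  have h3 : ((p+1).factorial : ℝ) ≠ 0 := Nat.cast_ne_zero.2 (Nat.factorial_ne_zero _)
  have h4 : ((p:ℝ) + 2) ≠ 0 := by positivity
  simp only [Pker, Nat.add_sub_cancel, h2]
  have : (x - a) ^ (p + 1) = (x - a) ^ p * (x - a) := by ring
  rw [this]
  push_cast
  field_simp
  ring

lemma Qker_hasDerivAt (a b θ : ℝ) (p : ℕ) (x : ℝ) :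
    HasDerivAt (Qker a b θ (p + 2)) (Qker a b θ (p + 1) x) x := by
  have h := shift_hasDerivAt b ((p + 2).factorial : ℝ) (-(θ * (p + 2) * (b - a) / 2)) p x
  have he : Qker a b θ (p + 2) = fun x =>
      (x - b) ^ (p + 1) / ((p + 2).factorial : ℝ) * (x - b - -(θ * (p + 2) * (b - a) / 2)) := by
    funext y; simp [Qker]
  rw [he]
  convert h using 1
  have h2 : ((p + 2).factorial : ℝ) = (p + 2) * ((p + 1).factorial : ℝ) := by
    rw [Nat.factorial_succ]; push_cast; ring
  have h3 : ((p+1).factorial : ℝ) ≠ 0 := Nat.cast_ne_zero.2 (Nat.factorial_ne_zero _)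
  have h4 : ((p:ℝ) + 2) ≠ 0 := by positivity
  simp only [Qker, Nat.add_sub_cancel, h2]
  have : (x - b) ^ (p + 1) = (x - b) ^ p * (x - b) := by ring
  rw [this]
  push_cast
  field_simp
  ring

lemma rep (a b θ : ℝ) (n : ℕ) (f : ℝ → ℝ) (hab : a < b)
    (hd : ∀ k < n, ∀ x ∈ Set.Icc a b,
      HasDerivAt (iteratedDeriv k f) (iteratedDeriv (k + 1) f x) x)
    (hcont : ContinuousOn (iteratedDeriv n f) (Set.Icc a b)) :
    ∀ k, 1 ≤ k → k ≤ n →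
      (∫ x in a..b, f x) - quadF a b θ k f
        = (-1:ℝ)^k * ((∫ x in a..(a+b)/2, Pker a b θ k x * iteratedDeriv k f x)
            + (∫ x in ((a+b)/2)..b, Qker a b θ k x * iteratedDeriv k f x)) := by
  have ham : a ≤ (a+b)/2 := by linarith
  have hmb : (a+b)/2 ≤ b := by linarith
  have hIam : Set.uIcc a ((a+b)/2) ⊆ Set.Icc a b := by
    rw [Set.uIcc_of_le ham]; exact Set.Icc_subset_Icc le_rfl hmb
  have hImb : Set.uIcc ((a+b)/2) b ⊆ Set.Icc a b := by
    rw [Set.uIcc_of_le hmb]; exact Set.Icc_subset_Icc ham le_rfl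
  have contD : ∀ j ≤ n, ContinuousOn (iteratedDeriv j f) (Set.Icc a b) := by
    intro j hj
    rcases eq_or_lt_of_le hj with rfl | h
    · exact hcont
    · exact fun x hx => ((hd j h x hx).continuousAt).continuousWithinAt
  have intA : ∀ j ≤ n, IntervalIntegrable (iteratedDeriv j f) volume a ((a+b)/2) :=
    fun j hj => ((contD j hj).mono hIam).intervalIntegrable
  have intB : ∀ j ≤ n, IntervalIntegrable (iteratedDeriv j f) volume ((a+b)/2) b :=
    fun j hj => ((contD j hj).mono hImb).intervalIntegrable
  intro k hk1 hkn
  induction k with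
  | zero => omega
  | succ j IH =>
    rcases Nat.eq_or_lt_of_le hk1 with h1 | h1
    · -- base case j + 1 = 1
      have hj0 : j = 0 := by omega
      subst hj0
      have hP1 : ∀ x : ℝ, HasDerivAt (Pker a b θ 1) 1 x := by
        intro x
        have he : Pker a b θ 1 = fun y => y - (a + θ * 1 * (b - a) / 2) := by
          funext y; simp [Pker]; ring
        rw [he]; simpa using (hasDerivAt_id x).sub_const (a + θ * 1 * (b - a) / 2)
      have hQ1 : ∀ x : ℝ, HasDerivAt (Qker a b θ 1) 1 x := by
        intro x
        have he : Qker a b θ 1 = fun y => y - (b - θ * 1 * (b - a) / 2) := by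
          funext y; simp [Qker]; ring
        rw [he]; simpa using (hasDerivAt_id x).sub_const (b - θ * 1 * (b - a) / 2)
      have hvA : ∀ x ∈ Set.uIcc a ((a+b)/2),
          HasDerivAt (iteratedDeriv 0 f) (iteratedDeriv 1 f x) x :=
        fun x hx => hd 0 (by omega) x (hIam hx)
      have hvB : ∀ x ∈ Set.uIcc ((a+b)/2) b,
          HasDerivAt (iteratedDeriv 0 f) (iteratedDeriv 1 f x) x :=
        fun x hx => hd 0 (by omega) x (hImb hx)
      have hA := integral_mul_deriv_eq_deriv_mul (fun x _ => hP1 x) hvA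
        intervalIntegrable_const (intA 1 (by omega))
      have hB := integral_mul_deriv_eq_deriv_mul (fun x _ => hQ1 x) hvB
        intervalIntegrable_const (intB 1 (by omega))
      rw [hA, hB]
      simp only [one_mul, iteratedDeriv_zero]
      have hsplit : (∫ x in a..((a+b)/2), iteratedDeriv 0 f x)
            + (∫ x in ((a+b)/2)..b, iteratedDeriv 0 f x)
          = ∫ x in a..b, iteratedDeriv 0 f x :=
        integral_add_adjacent_intervals (intA 0 (by omega)) (intB 0 (by omega))
      simp only [iteratedDeriv_zero] at hsplit
      rw [← hsplit]
      simp only [quadF, iteratedDeriv_zero]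
      rw [show (1-1)/2 = 0 from rfl, Finset.Icc_eq_empty (by omega), Finset.sum_empty]
      simp only [Pker, Qker, Nat.factorial_one, Nat.cast_one]
      push_cast
      ring
    · -- inductive step: j = p + 1
      obtain ⟨p, rfl⟩ : ∃ p, j = p + 1 := ⟨j - 1, by omega⟩
      have hIH := IH (by omega) (by omega)
      have hvA : ∀ x ∈ Set.uIcc a ((a+b)/2),
          HasDerivAt (iteratedDeriv (p+1) f) (iteratedDeriv (p+2) f x) x :=
        fun x hx => hd (p+1) (by omega) x (hIam hx)
      have hvB : ∀ x ∈ Set.uIcc ((a+b)/2) b,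
          HasDerivAt (iteratedDeriv (p+1) f) (iteratedDeriv (p+2) f x) x :=
        fun x hx => hd (p+1) (by omega) x (hImb hx)
      have hA := integral_mul_deriv_eq_deriv_mul
        (fun x _ => Pker_hasDerivAt a b θ p x) hvA
        ((Pker_cont a b θ (p+1)).intervalIntegrable a ((a+b)/2)) (intA (p+2) (by omega))
      have hB := integral_mul_deriv_eq_deriv_mul
        (fun x _ => Qker_hasDerivAt a b θ p x) hvB
        ((Qker_cont a b θ (p+1)).intervalIntegrable ((a+b)/2) b) (intB (p+2) (by omega))
      have hPa : Pker a b θ (p+2) a = 0 := by simp [Pker]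
      have hQb : Qker a b θ (p+2) b = 0 := by simp [Qker]
      rw [hA, hB, hPa, hQb]
      have hquad : quadF a b θ (p+2) f = quadF a b θ (p+1) f
          - (-1:ℝ)^(p+2) * (Pker a b θ (p+2) ((a+b)/2) - Qker a b θ (p+2) ((a+b)/2))
            * iteratedDeriv (p+1) f ((a+b)/2) := by
        rcases Nat.even_or_odd p with ⟨t, rfl⟩ | ⟨t, rfl⟩
        · -- p even : jump vanishes, sums identical
          have hPQ : Pker a b θ (t+t+2) ((a+b)/2) = Qker a b θ (t+t+2) ((a+b)/2) := by
            simp only [Pker, Qker, show t+t+2-1 = t+t+1 from by omega]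
            rw [show (a+b)/2 - a = (b-a)/2 from by ring,
              show (a+b)/2 - b = -((b-a)/2) from by ring,
              (show Odd (t+t+1) from ⟨t, by omega⟩).neg_pow]
            push_cast; ring
          have hsum : quadF a b θ (t+t+2) f = quadF a b θ (t+t+1) f := by
            simp only [quadF, show (t+t+2-1)/2 = (t+t+1-1)/2 from by omega]
          rw [hsum, hPQ]; ring
        · -- p odd : new midpoint term appears
          simp only [quadF, show (2*t+1+2-1)/2 = t+1 from by omega,
            show (2*t+1+1-1)/2 = t from by omega]
          rw [Finset.sum_Icc_succ_top (show 1 ≤ t+1 from by omega)]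
          simp only [Pker, Qker, show 2*t+1+2-1 = 2*t+2 from by omega]
          rw [show (a+b)/2 - a = (b-a)/2 from by ring,
            show (a+b)/2 - b = -((b-a)/2) from by ring,
            (show Even (2*t+2) from ⟨t+1, by omega⟩).neg_pow,
            show (-1:ℝ)^(2*t+1+2) = -1 from Odd.neg_one_pow ⟨t+1, by omega⟩]
          rw [show 2*(t+1) = 2*t+1+1 from by omega]
          rw [div_pow, show (2*t+1+1+1) = (2*t+2)+1 from by omega]
          rw [show (b-a)^(2*t+2+1) = (b-a)^(2*t+2) * (b-a) from pow_succ _ _]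
          have hF : ((2*t+2+1).factorial : ℝ) ≠ 0 := Nat.cast_ne_zero.2 (Nat.factorial_ne_zero _)
          have h2 : (2:ℝ)^(2*t+2) ≠ 0 := by positivity
          push_cast
          field_simp
          ring
      rw [hquad]
      linear_combination hIH

lemma Phi_hasDerivAt (a b θ : ℝ) (p : ℕ) (x : ℝ) :
    HasDerivAt (fun x => (x-a)^(p+2)/(((p:ℝ)+2) * ((p+1).factorial : ℝ))
      - θ*((p:ℝ)+1)*(b-a)/2 * (x-a)^(p+1)/(((p:ℝ)+1) * ((p+1).factorial : ℝ)))
      (Pker a b θ (p+1) x) x := by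
  have h1 : HasDerivAt (fun x : ℝ => (x - a)^(p+2)) (((p:ℝ)+2)*(x-a)^(p+1)) x := by
    have := (hasDerivAt_pow (p+2) (x-a)).comp x ((hasDerivAt_id x).sub_const a)
    simpa [mul_one, Function.comp_def] using this.congr_deriv (by push_cast; ring)
  have h2 : HasDerivAt (fun x : ℝ => (x - a)^(p+1)) (((p:ℝ)+1)*(x-a)^p) x := by
    have := (hasDerivAt_pow (p+1) (x-a)).comp x ((hasDerivAt_id x).sub_const a)
    simpa [mul_one, Function.comp_def] using this.congr_deriv (by push_cast; ring)
  have h3 := (h1.div_const (((p:ℝ)+2) * ((p+1).factorial : ℝ))).sub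
    (((h2.const_mul (θ*((p:ℝ)+1)*(b-a)/2))).div_const (((p:ℝ)+1) * ((p+1).factorial : ℝ)))
  refine h3.congr_deriv ?_
  have hF : ((p+1).factorial : ℝ) ≠ 0 := Nat.cast_ne_zero.2 (Nat.factorial_ne_zero _)
  have e1 : ((p:ℝ)+1) ≠ 0 := by positivity
  have e2 : ((p:ℝ)+2) ≠ 0 := by positivity
  simp only [Pker, Nat.add_sub_cancel]
  rw [show (x-a)^(p+1) = (x-a)^p * (x-a) from by ring]
  push_cast
  field_simp

lemma Pker_integral (a b θ : ℝ) (p : ℕ) (s : ℝ) :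
    (∫ x in a..s, Pker a b θ (p+1) x)
      = (s-a)^(p+2)/(((p:ℝ)+2) * ((p+1).factorial : ℝ))
        - θ*((p:ℝ)+1)*(b-a)/2 * (s-a)^(p+1)/(((p:ℝ)+1) * ((p+1).factorial : ℝ)) := by
  rw [integral_eq_sub_of_hasDerivAt (fun x _ => Phi_hasDerivAt a b θ p x)
    ((Pker_cont a b θ (p+1)).intervalIntegrable a s)]
  simp

lemma bound_piece (K g : ℝ → ℝ) (M u v a b : ℝ) (huv : u ≤ v)
    (h1 : Set.Ioo u v ⊆ Set.Ioo a b)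
    (hKcont : Continuous K)
    (hgint : IntervalIntegrable (fun x => K x * g x) volume u v)
    (hg : ∀ x ∈ Set.Ioo a b, |g x| ≤ M) :
    |∫ x in u..v, K x * g x| ≤ M * ∫ x in u..v, |K x| := by
  have hi1 : IntegrableOn (fun x => |K x * g x|) (Set.Ioo u v) volume :=
    (hgint.abs.1).mono_set Set.Ioo_subset_Ioc_self
  have hi2 : IntegrableOn (fun x => M * |K x|) (Set.Ioo u v) volume :=
    (((continuous_const.mul hKcont.abs).intervalIntegrable u v).1).mono_set Set.Ioo_subset_Ioc_self
  calc |∫ x in u..v, K x * g x| ≤ ∫ x in u..v, |K x * g x| :=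
        abs_integral_le_integral_abs huv
    _ = ∫ x in Set.Ioo u v, |K x * g x| := by
        rw [integral_of_le huv, integral_Ioc_eq_integral_Ioo]
    _ ≤ ∫ x in Set.Ioo u v, M * |K x| := by
        refine setIntegral_mono_on hi1 hi2 measurableSet_Ioo (fun x hx => ?_)
        rw [abs_mul, mul_comm]
        exact mul_le_mul_of_nonneg_right (hg x (h1 hx)) (abs_nonneg _)
    _ = ∫ x in u..v, M * |K x| := by
        rw [integral_of_le huv, integral_Ioc_eq_integral_Ioo]
    _ = M * ∫ x in u..v, |K x| := intervalIntegral.integral_const_mul _ _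

set_option maxHeartbeats 2000000 in
theorem stmt8 (a b θ : ℝ) (n : ℕ) (f : ℝ → ℝ) (M : ℝ)
    (hab : a < b) (hθ : θ ∈ Set.Icc (0 : ℝ) 1) (hn : 1 ≤ n)
    (hd : ∀ k < n, ∀ x ∈ Set.Icc a b,
      HasDerivAt (iteratedDeriv k f) (iteratedDeriv (k + 1) f x) x)
    (hcont : ContinuousOn (iteratedDeriv n f) (Set.Icc a b))
    (hM : ∀ x ∈ Set.Ioo a b, |iteratedDeriv n f x| ≤ M) :
    (1 ≤ θ * (n : ℝ) →
      |(∫ x in a..b, f x) - quadF a b θ n f|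
        ≤ (b - a) ^ (n + 1) / (((n + 1).factorial : ℝ) * 2 ^ n) * M
          * (θ * ((n : ℝ) + 1) - 1)) ∧
    (θ * (n : ℝ) < 1 →
      |(∫ x in a..b, f x) - quadF a b θ n f|
        ≤ (b - a) ^ (n + 1) / (((n + 1).factorial : ℝ) * 2 ^ n) * M
          * (2 * θ ^ (n + 1) * (n : ℝ) ^ n - θ * ((n : ℝ) + 1) + 1)) := by
  obtain ⟨hθ0, hθ1⟩ := hθ
  obtain ⟨p, rfl⟩ : ∃ p, n = p + 1 := ⟨n - 1, by omega⟩
  have ham : a ≤ (a+b)/2 := by linarith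
  have hmb : (a+b)/2 ≤ b := by linarith
  have hrep := rep a b θ (p+1) f hab hd hcont (p+1) (by omega) le_rfl
  have hsubA : Set.uIcc a ((a+b)/2) ⊆ Set.Icc a b := by
    rw [Set.uIcc_of_le ham]; exact Set.Icc_subset_Icc le_rfl hmb
  have hsubB : Set.uIcc ((a+b)/2) b ⊆ Set.Icc a b := by
    rw [Set.uIcc_of_le hmb]; exact Set.Icc_subset_Icc ham le_rfl
  have hintA : IntervalIntegrable
      (fun x => Pker a b θ (p+1) x * iteratedDeriv (p+1) f x) volume a ((a+b)/2) :=
    (((Pker_cont a b θ (p+1)).continuousOn).mul (hcont.mono hsubA)).intervalIntegrable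
  have hintB : IntervalIntegrable
      (fun x => Qker a b θ (p+1) x * iteratedDeriv (p+1) f x) volume ((a+b)/2) b :=
    (((Qker_cont a b θ (p+1)).continuousOn).mul (hcont.mono hsubB)).intervalIntegrable
  have hA := bound_piece (Pker a b θ (p+1)) (iteratedDeriv (p+1) f) M a ((a+b)/2) a b ham
    (fun x hx => ⟨hx.1, lt_of_lt_of_le hx.2 hmb⟩) (Pker_cont a b θ (p+1)) hintA hM
  have hB := bound_piece (Qker a b θ (p+1)) (iteratedDeriv (p+1) f) M ((a+b)/2) b a b hmb
    (fun x hx => ⟨lt_of_le_of_lt ham hx.1, hx.2⟩) (Qker_cont a b θ (p+1)) hintB hM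
  have hQP : (∫ x in ((a+b)/2)..b, |Qker a b θ (p+1) x|)
      = ∫ x in a..((a+b)/2), |Pker a b θ (p+1) x| := by
    have hpt : ∀ x : ℝ, |Qker a b θ (p+1) x| = |Pker a b θ (p+1) (a+b-x)| := by
      intro x
      simp only [Pker, Qker, Nat.add_sub_cancel]
      rw [show a+b-x-a = b-x from by ring, abs_mul, abs_mul, abs_div, abs_div,
        abs_pow, abs_pow, abs_sub_comm x b,
        show x - b + θ * ((p+1 : ℕ) : ℝ) * (b-a)/2
          = -(b - x - θ * ((p+1 : ℕ) : ℝ) * (b-a)/2) from by ring, abs_neg]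
    simp only [hpt]
    rw [integral_comp_sub_left (fun u => |Pker a b θ (p+1) u|) (a+b)]
    rw [show a+b-b = a from by ring, show a+b-(a+b)/2 = (a+b)/2 from by ring]
  have key : |(∫ x in a..b, f x) - quadF a b θ (p+1) f|
      ≤ 2 * M * ∫ x in a..((a+b)/2), |Pker a b θ (p+1) x| := by
    rw [hrep, abs_mul, abs_pow, abs_neg, abs_one, one_pow, one_mul]
    calc |(∫ x in a..((a+b)/2), Pker a b θ (p+1) x * iteratedDeriv (p+1) f x)
          + ∫ x in ((a+b)/2)..b, Qker a b θ (p+1) x * iteratedDeriv (p+1) f x|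
        ≤ |∫ x in a..((a+b)/2), Pker a b θ (p+1) x * iteratedDeriv (p+1) f x|
          + |∫ x in ((a+b)/2)..b, Qker a b θ (p+1) x * iteratedDeriv (p+1) f x| :=
          abs_add_le _ _
      _ ≤ 2 * M * ∫ x in a..((a+b)/2), |Pker a b θ (p+1) x| := by
          rw [hQP] at hB; linarith
  have hfac : ((p+1+1).factorial : ℝ) = ((p:ℝ)+2) * ((p+1).factorial : ℝ) := by
    rw [Nat.factorial_succ]; push_cast; ring
  have hF0 : ((p+1).factorial : ℝ) ≠ 0 := Nat.cast_ne_zero.2 (Nat.factorial_ne_zero _)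
  have h20 : (2:ℝ)^(p+1) ≠ 0 := by positivity
  have hp1 : ((p:ℝ)+1) ≠ 0 := by positivity
  have hp2 : ((p:ℝ)+2) ≠ 0 := by positivity
  constructor
  · intro hθn
    have hsign : Set.EqOn (fun x => |Pker a b θ (p+1) x|)
        (fun x => -Pker a b θ (p+1) x) (Set.uIcc a ((a+b)/2)) := by
      intro x hx
      rw [Set.uIcc_of_le ham] at hx
      have h1 : (0:ℝ) ≤ x - a := by linarith [hx.1]
      have h2 : x - a - θ * ((p+1 : ℕ) : ℝ) * (b-a)/2 ≤ 0 := by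
        push_cast
        push_cast at hθn
        nlinarith [hx.2, hab.le]
      simp only [Pker, Nat.add_sub_cancel]
      refine abs_of_nonpos ?_
      exact mul_nonpos_of_nonneg_of_nonpos
        (div_nonneg (pow_nonneg h1 _) (by positivity)) h2
    have hint : (∫ x in a..((a+b)/2), |Pker a b θ (p+1) x|)
        = -(∫ x in a..((a+b)/2), Pker a b θ (p+1) x) := by
      rw [intervalIntegral.integral_congr hsign, intervalIntegral.integral_neg]
    refine le_trans key (le_of_eq ?_)
    rw [hint, Pker_integral, show (a+b)/2 - a = (b-a)/2 from by ring]
    simp only [show p+2 = p+1+1 from by omega]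
    rw [hfac, div_pow, div_pow, pow_succ (b-a) (p+1), pow_succ (2:ℝ) (p+1)]
    push_cast
    field_simp
    ring
  · intro hθn
    have hc0 : 0 ≤ θ * ((p+1 : ℕ) : ℝ) * (b-a)/2 := by
      apply div_nonneg _ (by norm_num)
      exact mul_nonneg (mul_nonneg hθ0 (by positivity)) (by linarith)
    have hc2 : θ * ((p+1 : ℕ) : ℝ) * (b-a)/2 ≤ (b-a)/2 := by
      push_cast at hθn ⊢
      nlinarith
    have h1 : a ≤ a + θ * ((p+1 : ℕ) : ℝ) * (b-a)/2 := by linarith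
    have h2 : a + θ * ((p+1 : ℕ) : ℝ) * (b-a)/2 ≤ (a+b)/2 := by linarith
    have sign1 : Set.EqOn (fun x => |Pker a b θ (p+1) x|)
        (fun x => -Pker a b θ (p+1) x)
        (Set.uIcc a (a + θ * ((p+1 : ℕ) : ℝ) * (b-a)/2)) := by
      intro x hx
      rw [Set.uIcc_of_le h1] at hx
      have hx1 : (0:ℝ) ≤ x - a := by linarith [hx.1]
      have hx2 : x - a - θ * ((p+1 : ℕ) : ℝ) * (b-a)/2 ≤ 0 := by linarith [hx.2]
      simp only [Pker, Nat.add_sub_cancel]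
      refine abs_of_nonpos ?_
      exact mul_nonpos_of_nonneg_of_nonpos
        (div_nonneg (pow_nonneg hx1 _) (by positivity)) hx2
    have sign2 : Set.EqOn (fun x => |Pker a b θ (p+1) x|)
        (fun x => Pker a b θ (p+1) x)
        (Set.uIcc (a + θ * ((p+1 : ℕ) : ℝ) * (b-a)/2) ((a+b)/2)) := by
      intro x hx
      rw [Set.uIcc_of_le h2] at hx
      have hx1 : (0:ℝ) ≤ x - a := by linarith [hx.1]
      have hx2 : 0 ≤ x - a - θ * ((p+1 : ℕ) : ℝ) * (b-a)/2 := by linarith [hx.1]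
      simp only [Pker, Nat.add_sub_cancel]
      refine abs_of_nonneg ?_
      exact mul_nonneg (div_nonneg (pow_nonneg hx1 _) (by positivity)) hx2
    have e1 : (∫ x in a..(a + θ * ((p+1 : ℕ) : ℝ) * (b-a)/2), |Pker a b θ (p+1) x|)
        = -(∫ x in a..(a + θ * ((p+1 : ℕ) : ℝ) * (b-a)/2), Pker a b θ (p+1) x) := by
      rw [intervalIntegral.integral_congr sign1, intervalIntegral.integral_neg]
    have e2 : (∫ x in (a + θ * ((p+1 : ℕ) : ℝ) * (b-a)/2)..((a+b)/2), |Pker a b θ (p+1) x|)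
        = ∫ x in (a + θ * ((p+1 : ℕ) : ℝ) * (b-a)/2)..((a+b)/2), Pker a b θ (p+1) x :=
      intervalIntegral.integral_congr sign2
    have hsplitabs := integral_add_adjacent_intervals
      (((Pker_cont a b θ (p+1)).abs).intervalIntegrable (μ := volume) a (a + θ * ((p+1 : ℕ) : ℝ) * (b-a)/2))
      (((Pker_cont a b θ (p+1)).abs).intervalIntegrable (μ := volume) (a + θ * ((p+1 : ℕ) : ℝ) * (b-a)/2) ((a+b)/2))
    have hsplitP := integral_add_adjacent_intervals
      ((Pker_cont a b θ (p+1)).intervalIntegrable (μ := volume) a (a + θ * ((p+1 : ℕ) : ℝ) * (b-a)/2))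
      ((Pker_cont a b θ (p+1)).intervalIntegrable (μ := volume) (a + θ * ((p+1 : ℕ) : ℝ) * (b-a)/2) ((a+b)/2))
    have hval : (∫ x in a..((a+b)/2), |Pker a b θ (p+1) x|)
        = (∫ x in a..((a+b)/2), Pker a b θ (p+1) x)
          - 2 * ∫ x in a..(a + θ * ((p+1 : ℕ) : ℝ) * (b-a)/2), Pker a b θ (p+1) x := by
      rw [← hsplitabs, e1, e2]
      linarith [hsplitP]
    refine le_trans key (le_of_eq ?_)
    rw [hval, Pker_integral, Pker_integral, show (a+b)/2 - a = (b-a)/2 from by ring,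
      show a + θ * ((p+1 : ℕ) : ℝ) * (b-a)/2 - a = θ * ((p+1 : ℕ) : ℝ) * (b-a)/2 from by ring]
    simp only [show p+2 = p+1+1 from by omega]
    rw [hfac]
    push_cast
    simp only [div_pow, mul_pow, pow_succ]
    field_simp
    ring
end
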